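/- arXiv:1709.04187 — 12 statements merged into one kernel-verified Lean document; each statement's English description precedes it below -/
import Mathlib

section
/- Let (X,d) be a complete metric space and μ a finite Borel measure on X. Then μ(supp(μ)) = μ(X) if and only if μ is tight, where supp(μ) = {x ∈ X : μ(B(x,r)) > 0 for all r > 0}. -/
open MeasureTheory
open scoped ENNReal

/-- The "support" set of a measure on a metric space is closed. -/
lemma supportSet_isClosed {X : Type*} [MetricSpace X] [MeasurableSpace X]
    (μ : Measure X) :
    IsClosed {x : X | ∀ r : ℝ, 0 < r → 0 < μ (Metric.ball x r)} := by
  rw [← isOpen_compl_iff, Metric.isOpen_iff]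
  intro x hx
  simp only [Set.mem_compl_iff, Set.mem_setOf_eq] at hx
  push_neg at hx
  obtain ⟨r, hr, hr0⟩ := hx
  have hr0' : μ (Metric.ball x r) = 0 := le_antisymm hr0 zero_le
  refine ⟨r / 2, by positivity, ?_⟩
  intro y hy
  simp only [Set.mem_compl_iff, Set.mem_setOf_eq]
  push_neg
  refine ⟨r / 2, by positivity, ?_⟩
  have hsub : Metric.ball y (r / 2) ⊆ Metric.ball x r := by
    apply Metric.ball_subset_ball'
    have := Metric.mem_ball.mp hy
    linarith
  exact le_trans (measure_mono hsub) hr0'.le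

/-- For every `r > 0`, the support set can be covered by countably many `r`-balls
centered in it. -/
lemma supportSet_countable_cover {X : Type*} [MetricSpace X] [MeasurableSpace X] [BorelSpace X]
    (μ : Measure X) [IsFiniteMeasure μ] {r : ℝ} (hr : 0 < r) :
    ∃ T : Set X, T.Countable ∧
      {x : X | ∀ s : ℝ, 0 < s → 0 < μ (Metric.ball x s)} ⊆ ⋃ t ∈ T, Metric.ball t r := by
  set S := {x : X | ∀ s : ℝ, 0 < s → 0 < μ (Metric.ball x s)} with hS
  set 𝒜 : Set (Set X) := {T | T ⊆ S ∧ T.Pairwise fun a b => r ≤ dist a b} with h𝒜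
  have hzorn : ∀ c ⊆ 𝒜, IsChain (· ⊆ ·) c → ∃ ub ∈ 𝒜, ∀ s ∈ c, s ⊆ ub := by
    intro c hc hchain
    refine ⟨⋃₀ c, ⟨Set.sUnion_subset fun t ht => (hc ht).1, ?_⟩,
      fun s hs => Set.subset_sUnion_of_mem hs⟩
    intro a ha b hb hab
    obtain ⟨ta, hta, haa⟩ := ha
    obtain ⟨tb, htb, hbb⟩ := hb
    rcases hchain.total hta htb with hsub | hsub
    · exact (hc htb).2 (hsub haa) hbb hab
    · exact (hc hta).2 haa (hsub hbb) hab
  obtain ⟨T, hTmax⟩ := zorn_subset 𝒜 hzorn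
  · have hT𝒜 : T ∈ 𝒜 := hTmax.prop
    refine ⟨T, ?_, ?_⟩
    · -- countability via disjoint balls of positive measure
      have hdisj : Pairwise (Function.onFun Disjoint fun t : T => Metric.ball (t : X) (r / 2)) := by
        intro a b hab
        apply Metric.ball_disjoint_ball
        have hne : (a : X) ≠ (b : X) := Subtype.coe_ne_coe.mpr hab
        have := hT𝒜.2 a.2 b.2 hne
        linarith
      have hcnt := Measure.countable_meas_pos_of_disjoint_iUnion
        (μ := μ) (As := fun t : T => Metric.ball (t : X) (r / 2))
        (fun _ => measurableSet_ball) hdisj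
      have huniv : {i : T | 0 < μ (Metric.ball (i : X) (r / 2))} = Set.univ := by
        ext t
        simp only [Set.mem_setOf_eq, Set.mem_univ, iff_true]
        exact hT𝒜.1 t.2 (r / 2) (by positivity)
      rw [huniv, Set.countable_univ_iff] at hcnt
      exact Set.countable_coe_iff.mpr hcnt
    · -- covering via maximality
      intro x hx
      by_contra hnot
      simp only [Set.mem_iUnion, Metric.mem_ball, not_exists] at hnot
      have hfar : ∀ t ∈ T, r ≤ dist x t := by
        intro t ht
        by_contra hlt
        exact hnot t ht (not_le.mp hlt)
      have hxT : x ∉ T := by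
        intro hxT
        have := hfar x hxT
        simp only [dist_self] at this
        linarith
      have hins : insert x T ∈ 𝒜 := by
        refine ⟨Set.insert_subset hx hT𝒜.1, ?_⟩
        intro a ha b hb hab
        rcases Set.mem_insert_iff.mp ha with rfl | ha'
        · rcases Set.mem_insert_iff.mp hb with rfl | hb'
          · exact absurd rfl hab
          · exact hfar b hb'
        · rcases Set.mem_insert_iff.mp hb with rfl | hb'
          · rw [dist_comm]; exact hfar a ha'
          · exact hT𝒜.2 ha' hb' hab
      exact hxT (hTmax.2 hins (Set.subset_insert x T) (Set.mem_insert x T))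

/-- For a finite Borel measure `μ` on a complete metric space `X`, the support
`{x : X | ∀ r > 0, μ (ball x r) > 0}` has full measure `μ(X)` if and only if `μ` is tight
(inner regular): for every Borel set `A` and every `ε > 0` there is a compact `K ⊆ A`
with `μ A < μ K + ε`. -/
theorem support_full_measure_iff_tight {X : Type*} [MetricSpace X] [CompleteSpace X]
    [MeasurableSpace X] [BorelSpace X] (μ : Measure X) [IsFiniteMeasure μ] :
    μ {x : X | ∀ r : ℝ, 0 < r → 0 < μ (Metric.ball x r)} = μ Set.univ ↔
      ∀ A : Set X, MeasurableSet A → ∀ ε : ℝ≥0∞, 0 < ε →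
        ∃ K ⊆ A, IsCompact K ∧ μ A < μ K + ε := by
  set S := {x : X | ∀ r : ℝ, 0 < r → 0 < μ (Metric.ball x r)} with hSdef
  have hSclosed : IsClosed S := supportSet_isClosed μ
  constructor
  · intro h A hA ε hε
    rcases eq_top_or_lt_top ε with rfl | hεtop
    · exact ⟨∅, Set.empty_subset A, isCompact_empty, by simpa using measure_lt_top μ A⟩
    by_cases hA0 : μ A = 0
    · exact ⟨∅, Set.empty_subset A, isCompact_empty, by simpa [hA0] using hε⟩
    have hScompl : μ Sᶜ = 0 := by
      rw [measure_compl hSclosed.measurableSet (measure_ne_top μ S), h, tsub_self]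
    have hSne : S.Nonempty := by
      rw [Set.nonempty_iff_ne_empty]
      rintro hSe
      apply hA0
      rw [hSe, measure_empty] at h
      exact le_antisymm ((measure_mono (Set.subset_univ A)).trans h.symm.le) zero_le
    have hε2 : ε / 2 ≠ 0 := by
      simp only [ne_eq, ENNReal.div_eq_zero_iff, hε.ne', ENNReal.ofNat_ne_top, or_self,
        not_false_eq_true]
    -- closed approximation from weak regularity
    obtain ⟨C, hCA, hCclosed, hCmeas⟩ := hA.exists_isClosed_lt_add (measure_ne_top μ A) hε2
    -- countable covers of S by closed balls of radius 1/(n+1)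
    have hcov : ∀ n : ℕ, ∃ f : ℕ → X, S ⊆ ⋃ k, Metric.closedBall (f k) (1 / (n + 1)) := by
      intro n
      have hrn : (0 : ℝ) < 1 / (n + 1) := by positivity
      obtain ⟨T, hTc, hTcov⟩ := supportSet_countable_cover μ hrn
      have hTne : T.Nonempty := by
        obtain ⟨x, hx⟩ := hSne
        obtain ⟨t, ht, -⟩ := Set.mem_iUnion₂.mp (hTcov hx)
        exact ⟨t, ht⟩
      obtain ⟨f, rfl⟩ := hTc.exists_eq_range hTne
      refine ⟨f, fun x hx => ?_⟩
      obtain ⟨t, ⟨k, rfl⟩, htx⟩ := Set.mem_iUnion₂.mp (hTcov hx)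
      exact Set.mem_iUnion.mpr ⟨k, Metric.ball_subset_closedBall htx⟩
    choose f hf using hcov
    set δ : ℕ → ℝ≥0∞ := fun n => ε / 2 * 2⁻¹ ^ (n + 1) with hδdef
    have hδpos : ∀ n, 0 < δ n := by
      intro n
      apply ENNReal.mul_pos hε2
      exact pow_ne_zero _ (ENNReal.inv_ne_zero.mpr ENNReal.ofNat_ne_top)
    -- choose finite subcovers up to measure δ n
    have hm : ∀ n : ℕ, ∃ m : ℕ,
        μ (A \ ⋃ j, ⋃ (_ : j ≤ m), Metric.closedBall (f n j) (1 / (n + 1))) < δ n := by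
      intro n
      have hms : ∀ j : ℕ,
          NullMeasurableSet (A \ Metric.closedBall (f n j) (1 / (n + 1))) μ :=
        fun j => (hA.diff Metric.isClosed_closedBall.measurableSet).nullMeasurableSet
      have htend := tendsto_measure_iInter_le (μ := μ) hms ⟨0, measure_ne_top _ _⟩
      have hzero : μ (⋂ j, (A \ Metric.closedBall (f n j) (1 / (n + 1)))) = 0 := by
        have hsub : (⋂ j, (A \ Metric.closedBall (f n j) (1 / (n + 1)))) ⊆ Sᶜ := by
          rw [← Set.diff_iUnion]
          intro x hx hxS
          exact hx.2 (hf n hxS)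
        exact le_antisymm ((measure_mono hsub).trans hScompl.le) zero_le
      rw [hzero] at htend
      obtain ⟨m, hm⟩ := (htend.eventually_lt_const (hδpos n)).exists
      refine ⟨m, ?_⟩
      have heq : A \ (⋃ j, ⋃ (_ : j ≤ m), Metric.closedBall (f n j) (1 / (n + 1)))
          = ⋂ j, ⋂ (_ : j ≤ m), (A \ Metric.closedBall (f n j) (1 / (n + 1))) := by
        ext x
        simp only [Set.mem_diff, Set.mem_iUnion, Set.mem_iInter, not_exists]
        constructor
        · rintro ⟨hxA, hn⟩ j hj
          exact ⟨hxA, hn j hj⟩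
        · intro hx
          exact ⟨(hx 0 (Nat.zero_le m)).1, fun j hj => (hx j hj).2⟩
      rw [heq]
      exact hm
    choose m hmlt using hm
    set F : ℕ → Set X :=
      fun n => ⋃ j, ⋃ (_ : j ≤ m n), Metric.closedBall (f n j) (1 / (n + 1)) with hFdef
    set B : Set X := ⋂ n, F n with hBdef
    have hFclosed : ∀ n, IsClosed (F n) := by
      intro n
      exact (Set.finite_Iic (m n)).isClosed_biUnion fun j _ => Metric.isClosed_closedBall
    have hBclosed : IsClosed B := isClosed_iInter hFclosed
    have hBtb : TotallyBounded B := by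
      rw [Metric.totallyBounded_iff]
      intro d hd
      obtain ⟨n, hn⟩ := exists_nat_one_div_lt hd
      refine ⟨f n '' Set.Iic (m n), (Set.finite_Iic _).image _, ?_⟩
      intro x hx
      have hxF : x ∈ F n := Set.mem_iInter.mp hx n
      obtain ⟨j, hj, hxj⟩ := Set.mem_iUnion₂.mp hxF
      exact Set.mem_iUnion₂.mpr ⟨f n j, Set.mem_image_of_mem _ hj,
        Metric.closedBall_subset_ball hn hxj⟩
    have hBcomp : IsCompact B := hBtb.isCompact_of_isClosed hBclosed
    have hAB : μ (A \ B) ≤ ε / 2 := by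
      have h1 : A \ B = ⋃ n, A \ F n := by
        rw [hBdef, Set.diff_iInter]
      have hsum : (∑' n : ℕ, (2 : ℝ≥0∞)⁻¹ ^ (n + 1)) = 1 := by
        simp_rw [pow_succ]
        rw [ENNReal.tsum_mul_right, ENNReal.tsum_geometric, ENNReal.one_sub_inv_two, inv_inv]
        exact ENNReal.mul_inv_cancel two_ne_zero ENNReal.ofNat_ne_top
      calc μ (A \ B) ≤ ∑' n, μ (A \ F n) := by
            rw [h1]; exact measure_iUnion_le _
        _ ≤ ∑' n, δ n := ENNReal.tsum_le_tsum fun n => (hmlt n).le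
        _ = ε / 2 := by
            rw [hδdef]
            rw [ENNReal.tsum_mul_left, hsum, mul_one]
    refine ⟨C ∩ B, Set.inter_subset_left.trans hCA, hBcomp.inter_left hCclosed, ?_⟩
    calc μ A < μ C + ε / 2 := hCmeas
      _ ≤ (μ (C ∩ B) + μ (C \ B)) + ε / 2 := by
          gcongr
          exact measure_le_inter_add_diff μ C B
      _ ≤ (μ (C ∩ B) + ε / 2) + ε / 2 := by
          gcongr
          exact (measure_mono (Set.diff_subset_diff_left hCA)).trans hAB
      _ = μ (C ∩ B) + ε := by rw [add_assoc, ENNReal.add_halves]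
  · intro h
    have hSc : μ Sᶜ = 0 := by
      by_contra h0
      have hpos : 0 < μ Sᶜ := pos_iff_ne_zero.mpr h0
      obtain ⟨K, hKS, hKcomp, hKlt⟩ := h Sᶜ hSclosed.measurableSet.compl (μ Sᶜ) hpos
      have hK0 : μ K = 0 := by
        have hx : ∀ x : K, ∃ r, 0 < r ∧ μ (Metric.ball (x : X) r) = 0 := by
          intro x
          have hxS := hKS x.2
          simp only [hSdef, Set.mem_compl_iff, Set.mem_setOf_eq] at hxS
          push_neg at hxS
          obtain ⟨r, hr, hr0⟩ := hxS
          exact ⟨r, hr, le_antisymm hr0 zero_le⟩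
        choose r hrpos hr0 using hx
        obtain ⟨t, ht⟩ := hKcomp.elim_finite_subcover
          (fun x : K => Metric.ball (x : X) (r x)) (fun _ => Metric.isOpen_ball)
          (fun x hxK => Set.mem_iUnion.mpr ⟨⟨x, hxK⟩, Metric.mem_ball_self (hrpos _)⟩)
        refine le_antisymm ?_ zero_le
        calc μ K ≤ μ (⋃ i ∈ t, Metric.ball (i : X) (r i)) := measure_mono ht
          _ ≤ ∑ i ∈ t, μ (Metric.ball (i : X) (r i)) := measure_biUnion_finset_le t _
          _ = 0 := by simp [hr0]
      rw [hK0, zero_add] at hKlt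
      exact lt_irrefl _ hKlt
    rw [← measure_add_measure_compl hSclosed.measurableSet, hSc, add_zero]
end

section
/- Let X be a metric space equipped with a closed partial order and let μ, ν be tight Borel probability measures on X. Then the following are equivalent: (1) μ(U) ≤ ν(U) for every open upper set U ⊆ X; (2) μ(A) ≤ ν(A) for every closed upper set A ⊆ X; (3) μ(B) ≤ ν(B) for every Borel upper set B ⊆ X. -/
open MeasureTheory
open scoped ENNReal

/-- A Borel measure on a metric space is tight (inner regular) if every Borel set can be
approximated in measure from inside by compact subsets. -/
def MeasureIsTight {X : Type*} [TopologicalSpace X] [MeasurableSpace X]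
    (μ : Measure X) : Prop :=
  ∀ A : Set X, MeasurableSet A → ∀ ε : ℝ≥0∞, 0 < ε → ∃ K ⊆ A, IsCompact K ∧ μ A < μ K + ε

lemma isClosed_lowerClosure_aux {X : Type*} [TopologicalSpace X] [Preorder X]
    (hclosed : IsClosed {p : X × X | p.1 ≤ p.2}) {K : Set X} (hK : IsCompact K) :
    IsClosed {x : X | ∃ k ∈ K, x ≤ k} := by
  have : CompactSpace K := isCompact_iff_compactSpace.mp hK
  have hcont : Continuous (fun p : X × K => ((p.1, (p.2 : X)) : X × X)) := by continuity
  have hS : IsClosed {p : X × K | p.1 ≤ (p.2 : X)} := hclosed.preimage hcont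
  have himg := isClosedMap_fst_of_compactSpace (X := X) (Y := K) _ hS
  convert himg using 1
  ext x
  constructor
  · rintro ⟨k, hk, hle⟩
    exact ⟨(x, ⟨k, hk⟩), hle, rfl⟩
  · rintro ⟨⟨y, k⟩, hle, rfl⟩
    exact ⟨k, k.2, hle⟩

lemma isClosed_upperClosure_aux {X : Type*} [TopologicalSpace X] [Preorder X]
    (hclosed : IsClosed {p : X × X | p.1 ≤ p.2}) {K : Set X} (hK : IsCompact K) :
    IsClosed {x : X | ∃ k ∈ K, k ≤ x} := by
  have hswap : IsClosed {p : X × X | p.2 ≤ p.1} :=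
    hclosed.preimage continuous_swap
  have : CompactSpace K := isCompact_iff_compactSpace.mp hK
  have hcont : Continuous (fun p : X × K => ((p.1, (p.2 : X)) : X × X)) := by continuity
  have hS : IsClosed {p : X × K | (p.2 : X) ≤ p.1} := hswap.preimage hcont
  have himg := isClosedMap_fst_of_compactSpace (X := X) (Y := K) _ hS
  convert himg using 1
  ext x
  constructor
  · rintro ⟨k, hk, hle⟩
    exact ⟨(x, ⟨k, hk⟩), hle, rfl⟩
  · rintro ⟨⟨y, k⟩, hle, rfl⟩
    exact ⟨k, k.2, hle⟩

/-- For tight Borel probability measures `μ, ν` on a metric space with a closed partial order,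
the following are equivalent: (1) `μ U ≤ ν U` for every open upper set `U`;
(2) `μ A ≤ ν A` for every closed upper set `A`; (3) `μ B ≤ ν B` for every Borel upper set `B`. -/
theorem stochasticOrder_open_iff_closed_iff_borel {X : Type*} [MetricSpace X]
    [MeasurableSpace X] [BorelSpace X] [PartialOrder X]
    (hclosed : IsClosed {p : X × X | p.1 ≤ p.2})
    (μ ν : Measure X) [IsProbabilityMeasure μ] [IsProbabilityMeasure ν]
    (hμ : MeasureIsTight μ) (hν : MeasureIsTight ν) :
    ((∀ U : Set X, IsOpen U → IsUpperSet U → μ U ≤ ν U) ↔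
        (∀ A : Set X, IsClosed A → IsUpperSet A → μ A ≤ ν A)) ∧
      ((∀ U : Set X, IsOpen U → IsUpperSet U → μ U ≤ ν U) ↔
        (∀ B : Set X, MeasurableSet B → IsUpperSet B → μ B ≤ ν B)) := by
  -- (1) → (2)
  have h12 : (∀ U : Set X, IsOpen U → IsUpperSet U → μ U ≤ ν U) →
      ∀ A : Set X, IsClosed A → IsUpperSet A → μ A ≤ ν A := by
    intro h A hA hAup
    refine ENNReal.le_of_forall_pos_le_add fun ε hε _ => ?_
    obtain ⟨K, hKA, hKc, hKlt⟩ := hν Aᶜ (hA.measurableSet.compl) ε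
      (by exact_mod_cast hε)
    set D : Set X := {x : X | ∃ k ∈ K, x ≤ k} with hD
    have hDclosed : IsClosed D := isClosed_lowerClosure_aux hclosed hKc
    have hKD : K ⊆ D := fun k hk => ⟨k, hk, le_refl k⟩
    have hDA : D ⊆ Aᶜ := by
      rintro x ⟨k, hk, hle⟩
      intro hxA
      exact hKA hk (hAup hle hxA)
    have hUopen : IsOpen Dᶜ := hDclosed.isOpen_compl
    have hUup : IsUpperSet Dᶜ := by
      intro a b hab ha hb
      obtain ⟨k, hk, hle⟩ := hb
      exact ha ⟨k, hk, hab.trans hle⟩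
    have hAU : A ⊆ Dᶜ := fun x hx hxD => hDA hxD hx
    calc μ A ≤ μ Dᶜ := measure_mono hAU
      _ ≤ ν Dᶜ := h Dᶜ hUopen hUup
      _ = 1 - ν D := by
          rw [measure_compl hDclosed.measurableSet (measure_ne_top ν D), measure_univ]
      _ ≤ 1 - ν K := tsub_le_tsub_left (measure_mono hKD) 1
      _ ≤ ν A + ε := by
          rw [tsub_le_iff_right]
          have h1 := measure_add_measure_compl (μ := ν) hA.measurableSet
          rw [measure_univ] at h1
          rw [← h1]
          have : ν Aᶜ ≤ ν K + ε := hKlt.le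
          calc ν A + ν Aᶜ ≤ ν A + (ν K + ε) := by gcongr
            _ = ν A + ε + ν K := by ring
  -- (2) → (3)
  have h23 : (∀ A : Set X, IsClosed A → IsUpperSet A → μ A ≤ ν A) →
      ∀ B : Set X, MeasurableSet B → IsUpperSet B → μ B ≤ ν B := by
    intro h B hB hBup
    refine ENNReal.le_of_forall_pos_le_add fun ε hε _ => ?_
    obtain ⟨K, hKB, hKc, hKlt⟩ := hμ B hB ε (by exact_mod_cast hε)
    set C : Set X := {x : X | ∃ k ∈ K, k ≤ x} with hC
    have hCclosed : IsClosed C := isClosed_upperClosure_aux hclosed hKc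
    have hCup : IsUpperSet C := by
      rintro a b hab ⟨k, hk, hle⟩
      exact ⟨k, hk, hle.trans hab⟩
    have hKC : K ⊆ C := fun k hk => ⟨k, hk, le_refl k⟩
    have hCB : C ⊆ B := by
      rintro x ⟨k, hk, hle⟩
      exact hBup hle (hKB hk)
    calc μ B ≤ μ K + ε := hKlt.le
      _ ≤ μ C + ε := add_le_add_left (measure_mono hKC) ε
      _ ≤ ν C + ε := add_le_add_left (h C hCclosed hCup) ε
      _ ≤ ν B + ε := add_le_add_left (measure_mono hCB) ε
  have h31 : (∀ B : Set X, MeasurableSet B → IsUpperSet B → μ B ≤ ν B) →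
      ∀ U : Set X, IsOpen U → IsUpperSet U → μ U ≤ ν U :=
    fun h U hU hUup => h U hU.measurableSet hUup
  have h32 : (∀ B : Set X, MeasurableSet B → IsUpperSet B → μ B ≤ ν B) →
      ∀ A : Set X, IsClosed A → IsUpperSet A → μ A ≤ ν A :=
    fun h A hA hAup => h A hA.measurableSet hAup
  exact ⟨⟨h12, fun h2 => h31 (h23 h2)⟩, ⟨fun h1 => h23 (h12 h1), h31⟩⟩
end

section
/- Let X be a metric space equipped with a closed partial order and let μ, ν be tight Borel probability measures on X. Then the following are equivalent: (1) μ ≤ ν in the stochastic order; (2) for every monotone Borel-measurable function f : X → [0,∞], ∫ f dμ ≤ ∫ f dν (Lebesgue integrals, possibly infinite); (3) for every monotone bounded lower semicontinuous function f : X → [0,∞), ∫ f dμ ≤ ∫ f dν. -/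
open MeasureTheory
open scoped ENNReal

open Filter Set in
private lemma isClosed_down_of_isCompact {X : Type*} [MetricSpace X] [PartialOrder X]
    (hclosed : IsClosed {p : X × X | p.1 ≤ p.2}) {K : Set X} (hK : IsCompact K) :
    IsClosed {x : X | ∃ y ∈ K, x ≤ y} := by
  refine IsSeqClosed.isClosed ?_
  intro u x hu hux
  choose y hyK hle using hu
  obtain ⟨b, hbK, φ, hφ, hby⟩ := hK.tendsto_subseq hyK
  have htend : Tendsto (fun n => (u (φ n), y (φ n))) atTop (nhds (x, b)) :=
    (hux.comp hφ.tendsto_atTop).prodMk_nhds hby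
  exact ⟨b, hbK, hclosed.mem_of_tendsto htend (Eventually.of_forall fun n => hle _)⟩

/-- Key lemma: the stochastic order inequality on open upper sets extends to all
Borel upper sets, by tightness. -/
private lemma meas_upper_le {X : Type*} [MetricSpace X]
    [MeasurableSpace X] [BorelSpace X] [PartialOrder X]
    (hclosed : IsClosed {p : X × X | p.1 ≤ p.2})
    (μ ν : Measure X) [IsProbabilityMeasure μ] [IsProbabilityMeasure ν]
    (hμ : MeasureIsTight μ) (hν : MeasureIsTight ν)
    (h1 : ∀ U : Set X, IsOpen U → IsUpperSet U → μ U ≤ ν U)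
    {A : Set X} (hA : MeasurableSet A) (hAup : IsUpperSet A) : μ A ≤ ν A := by
  refine ENNReal.le_of_forall_pos_le_add fun ε hε _ => ?_
  have hε2 : (0 : ℝ≥0∞) < ε / 2 :=
    ENNReal.half_pos (by exact_mod_cast hε.ne')
  obtain ⟨K, hKA, hKc, hKμ⟩ := hμ A hA (ε / 2) hε2
  obtain ⟨K', hK'A, hK'c, hK'ν⟩ := hν Aᶜ hA.compl (ε / 2) hε2
  set D : Set X := {x : X | ∃ y ∈ K', x ≤ y} with hD
  have hDclosed : IsClosed D := isClosed_down_of_isCompact hclosed hK'c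
  have hDlower : IsLowerSet D := by
    intro a b hba ha
    obtain ⟨y, hy, hay⟩ := ha
    exact ⟨y, hy, hba.trans hay⟩
  have hKU : K ⊆ Dᶜ := by
    intro x hx hxD
    obtain ⟨y, hyK', hxy⟩ := hxD
    exact hK'A hyK' (hAup hxy (hKA hx))
  have hK'D : K' ⊆ D := fun y hy => ⟨y, hy, le_refl y⟩
  have step1 : μ A ≤ ν Dᶜ + ε / 2 := by
    calc μ A ≤ μ K + ε / 2 := hKμ.le
      _ ≤ μ Dᶜ + ε / 2 := add_le_add_left (measure_mono hKU) _
      _ ≤ ν Dᶜ + ε / 2 := add_le_add_left (h1 Dᶜ hDclosed.isOpen_compl hDlower.compl) _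
  have step2 : ν Dᶜ ≤ ν K'ᶜ := measure_mono (Set.compl_subset_compl.2 hK'D)
  have hK'm : MeasurableSet K' := hK'c.isClosed.measurableSet
  have step3 : ν K'ᶜ ≤ ν A + ε / 2 := by
    have hadd : ν K'ᶜ + ν K' = 1 := by
      rw [add_comm, measure_add_measure_compl hK'm, measure_univ]
    have hadd2 : ν A + ν Aᶜ = 1 := by
      rw [measure_add_measure_compl hA, measure_univ]
    have h3 : ν K'ᶜ + ν K' ≤ (ν A + ε / 2) + ν K' := by
      rw [hadd, ← hadd2]
      calc ν A + ν Aᶜ ≤ ν A + (ν K' + ε / 2) := add_le_add_right hK'ν.le _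
        _ = (ν A + ε / 2) + ν K' := by ring
    exact (ENNReal.add_le_add_iff_right (measure_ne_top ν K')).1 h3
  calc μ A ≤ ν Dᶜ + ε / 2 := step1
    _ ≤ ν K'ᶜ + ε / 2 := add_le_add_left step2 _
    _ ≤ (ν A + ε / 2) + ε / 2 := add_le_add_left step3 _
    _ = ν A + ε := by rw [add_assoc, ENNReal.add_halves]

open Set in
private lemma mono_lintegral_le {X : Type*} [MetricSpace X]
    [MeasurableSpace X] [BorelSpace X] [PartialOrder X]
    (hclosed : IsClosed {p : X × X | p.1 ≤ p.2})
    (μ ν : Measure X) [IsProbabilityMeasure μ] [IsProbabilityMeasure ν]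
    (hμ : MeasureIsTight μ) (hν : MeasureIsTight ν)
    (h1 : ∀ U : Set X, IsOpen U → IsUpperSet U → μ U ≤ ν U)
    (f : X → ℝ≥0∞) (hf : Measurable f) (hmono : Monotone f) :
    ∫⁻ x, f x ∂μ ≤ ∫⁻ x, f x ∂ν := by
  -- truncate
  have key : ∀ n : ℕ, ∫⁻ x, min (f x) n ∂μ ≤ ∫⁻ x, min (f x) n ∂ν := by
    intro n
    set g : X → ℝ := fun x => (min (f x) n).toReal with hg
    have hgmin : ∀ x, min (f x) n ≠ ∞ := fun x =>
      ne_top_of_le_ne_top (ENNReal.natCast_ne_top n) (min_le_right _ _)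
    have hofg : ∀ x, ENNReal.ofReal (g x) = min (f x) n := fun x =>
      ENNReal.ofReal_toReal (hgmin x)
    have hgm : Measurable g := (hf.min measurable_const).ennreal_toReal
    have hgmono : Monotone g := by
      intro a b hab
      exact ENNReal.toReal_mono (hgmin b) (min_le_min (hmono hab) le_rfl)
    have hgnn : ∀ x, 0 ≤ g x := fun x => ENNReal.toReal_nonneg
    have hμeq := lintegral_eq_lintegral_meas_le μ (Filter.Eventually.of_forall hgnn)
      hgm.aemeasurable
    have hνeq := lintegral_eq_lintegral_meas_le ν (Filter.Eventually.of_forall hgnn)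
      hgm.aemeasurable
    calc ∫⁻ x, min (f x) n ∂μ = ∫⁻ x, ENNReal.ofReal (g x) ∂μ :=
          lintegral_congr fun x => (hofg x).symm
      _ = ∫⁻ t in Ioi (0:ℝ), μ {a : X | t ≤ g a} := hμeq
      _ ≤ ∫⁻ t in Ioi (0:ℝ), ν {a : X | t ≤ g a} := by
          refine lintegral_mono fun t => ?_
          refine meas_upper_le hclosed μ ν hμ hν h1 ?_ ?_
          · exact measurableSet_le measurable_const hgm
          · intro a b hab ha
            exact le_trans ha (hgmono hab)
      _ = ∫⁻ x, ENNReal.ofReal (g x) ∂ν := hνeq.symm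
      _ = ∫⁻ x, min (f x) n ∂ν := lintegral_congr fun x => hofg x
  have hsup : ∀ x, (⨆ n : ℕ, min (f x) (n : ℝ≥0∞)) = f x := by
    intro x
    refine le_antisymm (iSup_le fun n => min_le_left _ _) ?_
    rcases eq_or_ne (f x) ∞ with h | h
    · have hn : ∀ n : ℕ, min (f x) n = n := fun n => by
        rw [h]; exact min_eq_right le_top
      calc f x = ⨆ n : ℕ, (n : ℝ≥0∞) := by rw [h, ENNReal.iSup_natCast]
        _ ≤ ⨆ n : ℕ, min (f x) n := iSup_mono fun n => (hn n).ge
    · obtain ⟨n, hn⟩ := ENNReal.exists_nat_gt h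
      refine le_trans ?_ (le_iSup (fun n : ℕ => min (f x) n) n)
      rw [min_eq_left hn.le]
  have hmon : Monotone fun (n : ℕ) (x : X) => min (f x) (n : ℝ≥0∞) := by
    intro a b hab x
    exact min_le_min le_rfl (by exact_mod_cast hab)
  have hμ' : ∫⁻ x, f x ∂μ = ⨆ n : ℕ, ∫⁻ x, min (f x) n ∂μ := by
    rw [← lintegral_iSup (fun n => hf.min measurable_const) hmon]
    exact lintegral_congr fun x => (hsup x).symm
  have hν' : ∫⁻ x, f x ∂ν = ⨆ n : ℕ, ∫⁻ x, min (f x) n ∂ν := by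
    rw [← lintegral_iSup (fun n => hf.min measurable_const) hmon]
    exact lintegral_congr fun x => (hsup x).symm
  rw [hμ', hν']
  exact iSup_mono key

/-- For tight Borel probability measures `μ, ν` on a metric space with a closed partial order,
the following are equivalent: (1) `μ ≤ ν` in the stochastic order (i.e. `μ U ≤ ν U` for every
open upper set `U`); (2) `∫⁻ f dμ ≤ ∫⁻ f dν` for every monotone Borel function
`f : X → ℝ≥0∞`; (3) `∫ f dμ ≤ ∫ f dν` for every monotone bounded lower semicontinuous
function `f : X → [0,∞)`. -/
theorem stochasticOrder_iff_lintegral_iff_integral {X : Type*} [MetricSpace X]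
    [MeasurableSpace X] [BorelSpace X] [PartialOrder X]
    (hclosed : IsClosed {p : X × X | p.1 ≤ p.2})
    (μ ν : Measure X) [IsProbabilityMeasure μ] [IsProbabilityMeasure ν]
    (hμ : MeasureIsTight μ) (hν : MeasureIsTight ν) :
    ((∀ U : Set X, IsOpen U → IsUpperSet U → μ U ≤ ν U) ↔
        (∀ f : X → ℝ≥0∞, Measurable f → Monotone f →
          ∫⁻ x, f x ∂μ ≤ ∫⁻ x, f x ∂ν)) ∧
      ((∀ U : Set X, IsOpen U → IsUpperSet U → μ U ≤ ν U) ↔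
        (∀ f : X → ℝ, Monotone f → LowerSemicontinuous f → (∀ x, 0 ≤ f x) →
          (∃ M : ℝ, ∀ x, f x ≤ M) → ∫ x, f x ∂μ ≤ ∫ x, f x ∂ν)) := by
  have h12 : (∀ U : Set X, IsOpen U → IsUpperSet U → μ U ≤ ν U) →
      ∀ f : X → ℝ≥0∞, Measurable f → Monotone f →
        ∫⁻ x, f x ∂μ ≤ ∫⁻ x, f x ∂ν :=
    fun h1 f hf hmono => mono_lintegral_le hclosed μ ν hμ hν h1 f hf hmono
  constructor
  · constructor
    · exact h12
    · intro h U hU hUup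
      have hind := h (U.indicator 1)
        ((measurable_one).indicator hU.measurableSet)
        (by
          intro a b hab
          by_cases ha : a ∈ U
          · rw [Set.indicator_of_mem ha, Set.indicator_of_mem (hUup hab ha)]
            exact le_rfl
          · rw [Set.indicator_of_notMem ha]; exact zero_le)
      rwa [lintegral_indicator_one hU.measurableSet,
        lintegral_indicator_one hU.measurableSet] at hind
  · constructor
    · intro h1 f hmono hlsc hnn hbdd
      obtain ⟨M, hM⟩ := hbdd
      have hmf : Measurable f := hlsc.measurable
      have hμint : ∫ x, f x ∂μ = (∫⁻ x, ENNReal.ofReal (f x) ∂μ).toReal :=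
        integral_eq_lintegral_of_nonneg_ae (Filter.Eventually.of_forall hnn)
          hmf.aestronglyMeasurable
      have hνint : ∫ x, f x ∂ν = (∫⁻ x, ENNReal.ofReal (f x) ∂ν).toReal :=
        integral_eq_lintegral_of_nonneg_ae (Filter.Eventually.of_forall hnn)
          hmf.aestronglyMeasurable
      rw [hμint, hνint]
      have hle : ∫⁻ x, ENNReal.ofReal (f x) ∂μ ≤ ∫⁻ x, ENNReal.ofReal (f x) ∂ν :=
        h12 h1 (fun x => ENNReal.ofReal (f x)) hmf.ennreal_ofReal
          (fun a b hab => ENNReal.ofReal_le_ofReal (hmono hab))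
      have hfin : ∫⁻ x, ENNReal.ofReal (f x) ∂ν ≠ ∞ := by
        refine ne_top_of_le_ne_top ?_
          (lintegral_mono fun x => ENNReal.ofReal_le_ofReal (hM x))
        rw [lintegral_const, measure_univ, mul_one]
        exact ENNReal.ofReal_ne_top
      exact ENNReal.toReal_mono hfin hle
    · intro h U hU hUup
      have hind := h (U.indicator 1)
        (by
          intro a b hab
          by_cases ha : a ∈ U
          · rw [Set.indicator_of_mem ha, Set.indicator_of_mem (hUup hab ha)]
            exact le_rfl
          · rw [Set.indicator_of_notMem ha]
            exact Set.indicator_nonneg (fun _ _ => zero_le_one) b)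
        (hU.lowerSemicontinuous_indicator zero_le_one)
        (fun x => Set.indicator_nonneg (fun _ _ => zero_le_one) x)
        ⟨1, fun x => by
          by_cases hx : x ∈ U
          · rw [Set.indicator_of_mem hx]
            exact le_rfl
          · rw [Set.indicator_of_notMem hx]; exact zero_le_one⟩
      rw [integral_indicator_one hU.measurableSet,
        integral_indicator_one hU.measurableSet] at hind
      exact (ENNReal.toReal_le_toReal (measure_ne_top μ U) (measure_ne_top ν U)).1 hind
end

section
/- Let X be a metric space equipped with a closed partial order and let μ, ν be tight Borel probability measures on X. Then the following are equivalent: (1) ν ≤ μ in the stochastic order; (2) for every antitone Borel-measurable function f : X → [0,∞], ∫ f dμ ≤ ∫ f dν (Lebesgue integrals, possibly infinite); (3) for every antitone bounded lower semicontinuous function f : X → [0,∞), ∫ f dμ ≤ ∫ f dν. -/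
open MeasureTheory
open scoped ENNReal

open Filter Topology in
/-- The up-closure of a compact set is closed when the order graph is closed. -/
lemma aux_isClosed_upClosure {X : Type*} [MetricSpace X] [PartialOrder X]
    (hclosed : IsClosed {p : X × X | p.1 ≤ p.2}) {K : Set X} (hK : IsCompact K) :
    IsClosed {x : X | ∃ k ∈ K, k ≤ x} := by
  refine IsSeqClosed.isClosed ?_
  intro u p hu hup
  choose k hkK hk using hu
  obtain ⟨a, haK, φ, hφ, hka⟩ := hK.tendsto_subseq hkK
  refine ⟨a, haK, ?_⟩
  have hup' : Tendsto (fun n => u (φ n)) atTop (𝓝 p) := hup.comp hφ.tendsto_atTop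
  have hpair : Tendsto (fun n => (k (φ n), u (φ n))) atTop (𝓝 (a, p)) :=
    hka.prodMk_nhds hup'
  exact hclosed.mem_of_tendsto hpair (Eventually.of_forall fun n => hk (φ n))

open Filter Topology in
/-- The down-closure of a compact set is closed when the order graph is closed. -/
lemma aux_isClosed_downClosure {X : Type*} [MetricSpace X] [PartialOrder X]
    (hclosed : IsClosed {p : X × X | p.1 ≤ p.2}) {K : Set X} (hK : IsCompact K) :
    IsClosed {x : X | ∃ k ∈ K, x ≤ k} := by
  refine IsSeqClosed.isClosed ?_
  intro u p hu hup
  choose k hkK hk using hu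
  obtain ⟨a, haK, φ, hφ, hka⟩ := hK.tendsto_subseq hkK
  refine ⟨a, haK, ?_⟩
  have hup' : Tendsto (fun n => u (φ n)) atTop (𝓝 p) := hup.comp hφ.tendsto_atTop
  have hpair : Tendsto (fun n => (u (φ n), k (φ n))) atTop (𝓝 (p, a)) :=
    hup'.prodMk_nhds hka
  exact hclosed.mem_of_tendsto hpair (Eventually.of_forall fun n => hk (φ n))

/-- For probability measures, comparison on a complement flips the comparison. -/
lemma aux_compl_le {X : Type*} [MeasurableSpace X] {μ ν : Measure X}
    [IsProbabilityMeasure μ] [IsProbabilityMeasure ν] {s : Set X} (hs : MeasurableSet s)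
    (h : μ sᶜ ≤ ν sᶜ) : ν s ≤ μ s := by
  have hμc : μ sᶜ = 1 - μ s := by
    rw [measure_compl hs (measure_ne_top _ _), measure_univ]
  have hνc : ν sᶜ = 1 - ν s := by
    rw [measure_compl hs (measure_ne_top _ _), measure_univ]
  rw [hμc, hνc] at h
  have h2 : (1 : ℝ≥0∞) - (1 - ν s) ≤ 1 - (1 - μ s) := tsub_le_tsub_left h 1
  rwa [ENNReal.sub_sub_cancel ENNReal.one_ne_top prob_le_one,
    ENNReal.sub_sub_cancel ENNReal.one_ne_top prob_le_one] at h2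

/-- For tight Borel probability measures `μ, ν` on a metric space with a closed partial order,
the following are equivalent: (1) `ν ≤ μ` in the stochastic order; (2) `∫⁻ f dμ ≤ ∫⁻ f dν`
for every antitone Borel function `f : X → ℝ≥0∞`; (3) `∫ f dμ ≤ ∫ f dν` for every antitone
bounded lower semicontinuous function `f : X → [0,∞)`. -/
theorem stochasticOrder_antitone_iff_lintegral_iff_integral {X : Type*} [MetricSpace X]
    [MeasurableSpace X] [BorelSpace X] [PartialOrder X]
    (hclosed : IsClosed {p : X × X | p.1 ≤ p.2})
    (μ ν : Measure X) [IsProbabilityMeasure μ] [IsProbabilityMeasure ν]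
    (hμ : MeasureIsTight μ) (hν : MeasureIsTight ν) :
    ((∀ U : Set X, IsOpen U → IsUpperSet U → ν U ≤ μ U) ↔
        (∀ f : X → ℝ≥0∞, Measurable f → Antitone f →
          ∫⁻ x, f x ∂μ ≤ ∫⁻ x, f x ∂ν)) ∧
      ((∀ U : Set X, IsOpen U → IsUpperSet U → ν U ≤ μ U) ↔
        (∀ f : X → ℝ, Antitone f → LowerSemicontinuous f → (∀ x, 0 ≤ f x) →
          (∃ M : ℝ, ∀ x, f x ≤ M) → ∫ x, f x ∂μ ≤ ∫ x, f x ∂ν)) := by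
  -- Key step: condition (1) implies `μ A ≤ ν A` for every Borel lower set `A`.
  have lower_le : (∀ U : Set X, IsOpen U → IsUpperSet U → ν U ≤ μ U) →
      ∀ A : Set X, MeasurableSet A → IsLowerSet A → μ A ≤ ν A := by
    intro hP A hA hAlow
    refine ENNReal.le_of_forall_pos_le_add fun ε hε _ => ?_
    obtain ⟨K, hKA, hKc, hlt⟩ := hμ A hA ε (by exact_mod_cast hε)
    set L : Set X := {x : X | ∃ k ∈ K, x ≤ k} with hL
    have hLclosed : IsClosed L := aux_isClosed_downClosure hclosed hKc
    have hLlow : IsLowerSet L := by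
      rintro a b hba ⟨k, hk, hak⟩
      exact ⟨k, hk, hba.trans hak⟩
    have hKL : K ⊆ L := fun k hk => ⟨k, hk, le_rfl⟩
    have hLA : L ⊆ A := by
      rintro x ⟨k, hk, hxk⟩
      exact hAlow hxk (hKA hk)
    have hμL : μ L ≤ ν L :=
      aux_compl_le hLclosed.measurableSet
        (hP Lᶜ hLclosed.isOpen_compl hLlow.compl)
    calc μ A ≤ μ K + ε := hlt.le
      _ ≤ μ L + ε := add_le_add_left (measure_mono hKL) ε
      _ ≤ ν L + ε := add_le_add_left hμL ε
      _ ≤ ν A + ε := add_le_add_left (measure_mono hLA) ε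
  -- (1) → (2)
  have h12 : (∀ U : Set X, IsOpen U → IsUpperSet U → ν U ≤ μ U) →
      ∀ f : X → ℝ≥0∞, Measurable f → Antitone f →
        ∫⁻ x, f x ∂μ ≤ ∫⁻ x, f x ∂ν := by
    intro hP f hf hanti
    have key : ∀ n : ℕ, ∫⁻ x, min (f x) n ∂μ ≤ ∫⁻ x, min (f x) n ∂ν := by
      intro n
      set g : X → ℝ := fun x => (min (f x) n).toReal with hg
      have hgm : Measurable g := (hf.min measurable_const).ennreal_toReal
      have hg_nonneg : ∀ x, 0 ≤ g x := fun x => ENNReal.toReal_nonneg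
      have hofReal : ∀ x, ENNReal.ofReal (g x) = min (f x) (n : ℝ≥0∞) := by
        intro x
        exact ENNReal.ofReal_toReal
          ((min_le_right _ _).trans_lt (ENNReal.natCast_lt_top n)).ne
      have hmin_anti : Antitone fun x => min (f x) (n : ℝ≥0∞) := fun a b hab =>
        min_le_min (hanti hab) le_rfl
      have hkey := lintegral_eq_lintegral_meas_lt μ
        (Filter.Eventually.of_forall hg_nonneg) hgm.aemeasurable
      have hkey' := lintegral_eq_lintegral_meas_lt ν
        (Filter.Eventually.of_forall hg_nonneg) hgm.aemeasurable
      calc ∫⁻ x, min (f x) n ∂μ = ∫⁻ x, ENNReal.ofReal (g x) ∂μ := by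
            simp_rw [hofReal]
        _ = ∫⁻ t in Set.Ioi 0, μ {a | t < g a} := hkey
        _ ≤ ∫⁻ t in Set.Ioi 0, ν {a | t < g a} := by
            refine lintegral_mono fun t => ?_
            refine lower_le hP _ (measurableSet_lt measurable_const hgm) ?_
            intro a b hba ha
            have : g a ≤ g b := by
              refine ENNReal.toReal_mono
                ((min_le_right _ _).trans_lt (ENNReal.natCast_lt_top n)).ne
                (hmin_anti hba)
            exact lt_of_lt_of_le ha this
        _ = ∫⁻ x, ENNReal.ofReal (g x) ∂ν := hkey'.symm
        _ = ∫⁻ x, min (f x) n ∂ν := by simp_rw [hofReal]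
    have hsup : ∀ x, (⨆ n : ℕ, min (f x) (n : ℝ≥0∞)) = f x := by
      intro x
      rcases eq_or_ne (f x) ∞ with h | h
      · simp only [h, min_eq_right (le_top : (_ : ℝ≥0∞) ≤ ∞)]
        exact h ▸ ENNReal.iSup_natCast
      · obtain ⟨n, hn⟩ := ENNReal.exists_nat_gt h
        refine le_antisymm (iSup_le fun m => min_le_left _ _) ?_
        refine le_trans ?_ (le_iSup _ n)
        simp [min_eq_left hn.le]
    have hmono : Monotone fun (n : ℕ) (x : X) => min (f x) (n : ℝ≥0∞) := by
      intro n m hnm x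
      exact min_le_min le_rfl (by exact_mod_cast Nat.cast_le.mpr hnm)
    have hmeas : ∀ n : ℕ, Measurable fun x => min (f x) (n : ℝ≥0∞) := fun n =>
      hf.min measurable_const
    calc ∫⁻ x, f x ∂μ = ∫⁻ x, ⨆ n : ℕ, min (f x) (n : ℝ≥0∞) ∂μ := by
          simp_rw [hsup]
      _ = ⨆ n : ℕ, ∫⁻ x, min (f x) (n : ℝ≥0∞) ∂μ := lintegral_iSup hmeas hmono
      _ ≤ ⨆ n : ℕ, ∫⁻ x, min (f x) (n : ℝ≥0∞) ∂ν := iSup_mono key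
      _ = ∫⁻ x, ⨆ n : ℕ, min (f x) (n : ℝ≥0∞) ∂ν := (lintegral_iSup hmeas hmono).symm
      _ = ∫⁻ x, f x ∂ν := by simp_rw [hsup]
  -- (2) → (1)
  have h21 : (∀ f : X → ℝ≥0∞, Measurable f → Antitone f →
      ∫⁻ x, f x ∂μ ≤ ∫⁻ x, f x ∂ν) →
      ∀ U : Set X, IsOpen U → IsUpperSet U → ν U ≤ μ U := by
    intro h2 U hU hUup
    refine aux_compl_le hU.measurableSet ?_
    have hUc : MeasurableSet Uᶜ := hU.measurableSet.compl
    have := h2 (Uᶜ.indicator fun _ => (1 : ℝ≥0∞))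
      (measurable_const.indicator hUc) ?_
    · rwa [lintegral_indicator hUc, lintegral_indicator hUc,
        setLIntegral_const, setLIntegral_const, one_mul, one_mul] at this
    · intro a b hab
      by_cases hb : b ∈ Uᶜ
      · have ha : a ∈ Uᶜ := hUup.compl hab hb
        rw [Set.indicator_of_mem hb, Set.indicator_of_mem ha]
      · rw [Set.indicator_of_notMem hb]
        exact zero_le
  -- (1) → (3)
  have h13 : (∀ U : Set X, IsOpen U → IsUpperSet U → ν U ≤ μ U) →
      ∀ f : X → ℝ, Antitone f → LowerSemicontinuous f → (∀ x, 0 ≤ f x) →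
        (∃ M : ℝ, ∀ x, f x ≤ M) → ∫ x, f x ∂μ ≤ ∫ x, f x ∂ν := by
    intro hP f hanti hlsc hnn hbdd
    obtain ⟨M, hM⟩ := hbdd
    have hfm : Measurable f := hlsc.measurable
    have hkey := h12 hP (fun x => ENNReal.ofReal (f x))
      (ENNReal.measurable_ofReal.comp hfm)
      (fun a b hab => ENNReal.ofReal_le_ofReal (hanti hab))
    have hbound : ∫⁻ x, ENNReal.ofReal (f x) ∂ν ≤ ENNReal.ofReal M := by
      calc ∫⁻ x, ENNReal.ofReal (f x) ∂ν
          ≤ ∫⁻ _, ENNReal.ofReal M ∂ν :=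
            lintegral_mono fun x => ENNReal.ofReal_le_ofReal (hM x)
        _ = ENNReal.ofReal M := by simp
    rw [integral_eq_lintegral_of_nonneg_ae (Filter.Eventually.of_forall hnn)
        hfm.aestronglyMeasurable,
      integral_eq_lintegral_of_nonneg_ae (Filter.Eventually.of_forall hnn)
        hfm.aestronglyMeasurable]
    exact ENNReal.toReal_mono (hbound.trans_lt ENNReal.ofReal_lt_top).ne hkey
  -- (3) → (1)
  have h31 : (∀ f : X → ℝ, Antitone f → LowerSemicontinuous f → (∀ x, 0 ≤ f x) →
      (∃ M : ℝ, ∀ x, f x ≤ M) → ∫ x, f x ∂μ ≤ ∫ x, f x ∂ν) →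
      ∀ U : Set X, IsOpen U → IsUpperSet U → ν U ≤ μ U := by
    intro h3 U hU hUup
    refine aux_compl_le hU.measurableSet ?_
    refine ENNReal.le_of_forall_pos_le_add fun ε hε _ => ?_
    obtain ⟨K, hKU, hKc, hlt⟩ := hν U hU.measurableSet ε (by exact_mod_cast hε)
    set T : Set X := {x : X | ∃ k ∈ K, k ≤ x} with hT
    have hTclosed : IsClosed T := aux_isClosed_upClosure hclosed hKc
    have hTup : IsUpperSet T := by
      rintro a b hab ⟨k, hk, hka⟩
      exact ⟨k, hk, hka.trans hab⟩
    have hKT : K ⊆ T := fun k hk => ⟨k, hk, le_rfl⟩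
    have hTU : T ⊆ U := by
      rintro x ⟨k, hk, hkx⟩
      exact hUup hkx (hKU hk)
    set V : Set X := Tᶜ with hV
    have hVopen : IsOpen V := hTclosed.isOpen_compl
    have hVmeas : MeasurableSet V := hVopen.measurableSet
    -- apply (3) to the indicator of the open lower set V
    have hind := h3 (V.indicator fun _ => (1 : ℝ)) ?_
      (hVopen.lowerSemicontinuous_indicator zero_le_one) ?_ ⟨1, ?_⟩
    · rw [integral_indicator_const (1 : ℝ) hVmeas,
        integral_indicator_const (1 : ℝ) hVmeas, smul_eq_mul, smul_eq_mul,
        mul_one, mul_one] at hind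
      have hμνV : μ V ≤ ν V := by
        rw [← ENNReal.toReal_le_toReal (measure_ne_top μ V) (measure_ne_top ν V)]
        exact hind
      have hUcV : Uᶜ ⊆ V := Set.compl_subset_compl.mpr hTU
      have hνV : ν V = 1 - ν T := by
        rw [hV, measure_compl hTclosed.measurableSet (measure_ne_top _ _), measure_univ]
      have step1 : μ Uᶜ ≤ ν V := (measure_mono hUcV).trans hμνV
      have step2 : ν V ≤ 1 - ν K := by
        rw [hνV]; exact tsub_le_tsub_left (measure_mono hKT) 1
      have step3 : (1 : ℝ≥0∞) - ν K ≤ ν Uᶜ + ε := by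
        rw [tsub_le_iff_right]
        have h1 : ν U + ν Uᶜ = 1 := by
          rw [measure_add_measure_compl hU.measurableSet, measure_univ]
        calc (1 : ℝ≥0∞) = ν U + ν Uᶜ := h1.symm
          _ ≤ (ν K + ε) + ν Uᶜ := add_le_add_left hlt.le _
          _ = ν Uᶜ + ε + ν K := by ring
      exact step1.trans (step2.trans step3)
    · -- antitone
      intro a b hab
      have hVlow : IsLowerSet V := hTup.compl
      by_cases hb : b ∈ V
      · have ha : a ∈ V := hVlow hab hb
        rw [Set.indicator_of_mem hb, Set.indicator_of_mem ha]
      · rw [Set.indicator_of_notMem hb]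
        exact Set.indicator_nonneg (fun _ _ => zero_le_one) a
    · -- nonneg
      intro x
      exact Set.indicator_nonneg (fun _ _ => zero_le_one) x
    · -- bounded
      intro x
      by_cases hx : x ∈ V
      · rw [Set.indicator_of_mem hx]
      · rw [Set.indicator_of_notMem hx]
        exact zero_le_one
  exact ⟨⟨h12, h21⟩, ⟨fun hP => h13 hP, h31⟩⟩
end

section
/- Let (X,d) be a metric space equipped with a closed partial order satisfying: for all x ≤ y in X and all x₁ ∈ X there exists y₁ ∈ X with x₁ ≤ y₁ and d(y,y₁) ≤ d(x,x₁). Then for tight Borel probability measures μ, ν on X the following are equivalent: (1) μ ≤ ν in the stochastic order; (2) for every continuous bounded monotone f : X → [0,∞), ∫ f dμ ≤ ∫ f dν; (3) for every continuous bounded antitone f : X → [0,∞), ∫ f dν ≤ ∫ f dμ. -/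
open MeasureTheory
open scoped ENNReal

section Aux

variable {X : Type*} [MetricSpace X] [PartialOrder X]

open Metric Filter Topology

lemma antitone_infDist_aux
    (hprop : ∀ x y x₁ : X, x ≤ y → ∃ y₁ : X, x₁ ≤ y₁ ∧ dist y y₁ ≤ dist x x₁)
    {A : Set X} (hA : IsUpperSet A) : Antitone fun x => infDist x A := by
  intro x y hxy
  rcases A.eq_empty_or_nonempty with rfl | hne
  · simp [Metric.infDist_empty]
  · refine le_of_forall_pos_le_add fun ε hε => ?_
    obtain ⟨a, haA, ha⟩ := (infDist_lt_iff hne).1 (lt_add_of_pos_right (infDist x A) hε)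
    obtain ⟨y₁, hay₁, hd⟩ := hprop x y a hxy
    calc infDist y A ≤ dist y y₁ := infDist_le_dist_of_mem (hA hay₁ haA)
      _ ≤ dist x a := hd
      _ ≤ infDist x A + ε := ha.le

lemma isClosed_upperClosure_compact
    (hclosed : IsClosed {p : X × X | p.1 ≤ p.2}) {K : Set X} (hK : IsCompact K) :
    IsClosed {y | ∃ a ∈ K, a ≤ y} := by
  apply IsSeqClosed.isClosed
  intro b b₀ hb hlim
  choose a ha hab using hb
  obtain ⟨c, hcK, φ, hφ, hac⟩ := hK.tendsto_subseq ha
  have hbt : Filter.Tendsto (fun k => (a (φ k), b (φ k))) atTop (nhds (c, b₀)) :=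
    Filter.Tendsto.prodMk_nhds hac (hlim.comp hφ.tendsto_atTop)
  exact ⟨c, hcK, hclosed.mem_of_tendsto hbt (Filter.Eventually.of_forall fun k => hab (φ k))⟩

variable [MeasurableSpace X] [BorelSpace X]

lemma integral_between_indicators (μ : Measure X) [IsProbabilityMeasure μ]
    {g : X → ℝ} (hg : Continuous g) (h0 : ∀ x, 0 ≤ g x) (h1 : ∀ x, g x ≤ 1)
    {A S : Set X} (hA : MeasurableSet A) (hS : MeasurableSet S)
    (hgA : ∀ x ∈ A, g x = 1) (hgS : ∀ x, x ∉ S → g x = 0) :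
    μ A ≤ ENNReal.ofReal (∫ x, g x ∂μ) ∧ ENNReal.ofReal (∫ x, g x ∂μ) ≤ μ S := by
  have hgi : Integrable g μ := by
    refine (integrable_const (1 : ℝ)).mono' hg.aestronglyMeasurable ?_
    exact Filter.Eventually.of_forall fun x => by
      rw [Real.norm_eq_abs, abs_of_nonneg (h0 x)]; exact h1 x
  have hiA : Integrable (A.indicator (fun _ => (1:ℝ))) μ :=
    (integrable_const (1 : ℝ)).indicator hA
  have hiS : Integrable (S.indicator (fun _ => (1:ℝ))) μ :=
    (integrable_const (1 : ℝ)).indicator hS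
  have h₁ : ∫ x, A.indicator (fun _ => (1:ℝ)) x ∂μ ≤ ∫ x, g x ∂μ := by
    refine integral_mono hiA hgi fun x => ?_
    by_cases hx : x ∈ A
    · simp [Set.indicator_of_mem hx, (hgA x hx).ge]
    · simp [Set.indicator_of_notMem hx, h0 x]
  have h₂ : ∫ x, g x ∂μ ≤ ∫ x, S.indicator (fun _ => (1:ℝ)) x ∂μ := by
    refine integral_mono hgi hiS fun x => ?_
    by_cases hx : x ∈ S
    · simp [Set.indicator_of_mem hx, h1 x]
    · simp [Set.indicator_of_notMem hx, (hgS x hx).le]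
  have eA : ∫ x, A.indicator (fun _ => (1:ℝ)) x ∂μ = (μ A).toReal := by
    simp [integral_indicator hA, Measure.real]
  have eS : ∫ x, S.indicator (fun _ => (1:ℝ)) x ∂μ = (μ S).toReal := by
    simp [integral_indicator hS, Measure.real]
  constructor
  · calc μ A = ENNReal.ofReal (μ A).toReal := (ENNReal.ofReal_toReal (measure_ne_top μ A)).symm
      _ ≤ ENNReal.ofReal (∫ x, g x ∂μ) := ENNReal.ofReal_le_ofReal (eA ▸ h₁)
  · calc ENNReal.ofReal (∫ x, g x ∂μ) ≤ ENNReal.ofReal (μ S).toReal :=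
        ENNReal.ofReal_le_ofReal (eS ▸ h₂)
      _ = μ S := ENNReal.ofReal_toReal (measure_ne_top μ S)

/-- Key lemma: from integral inequalities for `[0,1]`-valued continuous monotone functions,
deduce the stochastic order inequality on open upper sets. -/
lemma stochastic_of_int (hclosed : IsClosed {p : X × X | p.1 ≤ p.2})
    (hprop : ∀ x y x₁ : X, x ≤ y → ∃ y₁ : X, x₁ ≤ y₁ ∧ dist y y₁ ≤ dist x x₁)
    (μ ν : Measure X) [IsProbabilityMeasure μ] [IsProbabilityMeasure ν]
    (hμ : MeasureIsTight μ)
    (hInt : ∀ g : X → ℝ, Continuous g → Monotone g → (∀ x, 0 ≤ g x) → (∀ x, g x ≤ 1) →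
      ∫ x, g x ∂μ ≤ ∫ x, g x ∂ν)
    {U : Set X} (hU : IsOpen U) (hUu : IsUpperSet U) : μ U ≤ ν U := by
  refine ENNReal.le_of_forall_pos_le_add fun ε hε hνU => ?_
  obtain ⟨K, hKU, hKc, hKm⟩ := hμ U hU.measurableSet ε (by exact_mod_cast hε)
  rcases K.eq_empty_or_nonempty with rfl | hKne
  · calc μ U ≤ μ ∅ + ε := hKm.le
      _ = ε := by simp
      _ ≤ ν U + ε := le_add_self
  -- the upper closure of K
  set A : Set X := {y | ∃ a ∈ K, a ≤ y} with hAdef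
  have hAu : IsUpperSet A := fun x y hxy ⟨a, haK, hax⟩ => ⟨a, haK, hax.trans hxy⟩
  have hAc : IsClosed A := isClosed_upperClosure_compact hclosed hKc
  have hKA : K ⊆ A := fun a ha => ⟨a, ha, le_refl a⟩
  have hAU : A ⊆ U := fun y ⟨a, haK, hay⟩ => hUu hay (hKU haK)
  have hAne : A.Nonempty := hKne.mono hKA
  have hanti : Antitone fun x => infDist x A := antitone_infDist_aux hprop hAu
  -- shrinking open upper neighborhoods of A
  set S : ℕ → Set X := fun n => {x | infDist x A < 1 / (n + 1)} with hSdef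
  have hSopen : ∀ n, IsOpen (S n) := fun n =>
    isOpen_lt (continuous_infDist_pt A) continuous_const
  have hSanti : Antitone S := by
    intro m n hmn x hx
    simp only [hSdef, Set.mem_setOf_eq] at hx ⊢
    refine lt_of_lt_of_le hx ?_
    have hmn' : ((m:ℝ) + 1) ≤ (n:ℝ) + 1 := by exact_mod_cast Nat.succ_le_succ hmn
    exact one_div_le_one_div_of_le (by positivity) hmn'
  have hSinter : ⋂ n, S n = A := by
    ext x
    simp only [Set.mem_iInter, hSdef, Set.mem_setOf_eq]
    constructor
    · intro h
      have h0 : infDist x A ≤ 0 := by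
        by_contra hc
        push_neg at hc
        obtain ⟨n, hn⟩ := exists_nat_one_div_lt hc
        exact absurd (h n) (not_lt.2 hn.le)
      have : infDist x A = 0 := le_antisymm h0 Metric.infDist_nonneg
      exact (hAc.mem_iff_infDist_zero hAne).2 this
    · intro hxA n
      rw [Metric.infDist_zero_of_mem hxA]
      positivity
  -- for each n, `μ A ≤ ν (S n)` using the monotone function `g n`
  have key : ∀ n : ℕ, μ A ≤ ν (S n) := by
    intro n
    set g : X → ℝ := fun x => max 0 (1 - (n + 1) * infDist x A) with hgdef
    have hgc : Continuous g :=
      continuous_const.max (continuous_const.sub (continuous_const.mul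
        (continuous_infDist_pt A)))
    have hgm : Monotone g := by
      intro x y hxy
      have hd := mul_le_mul_of_nonneg_left (hanti hxy) (by positivity : (0:ℝ) ≤ (n:ℝ) + 1)
      exact max_le_max le_rfl (by linarith)
    have hg0 : ∀ x, 0 ≤ g x := fun x => le_max_left _ _
    have hg1 : ∀ x, g x ≤ 1 := by
      intro x
      apply max_le zero_le_one
      have : (0:ℝ) ≤ (n + 1) * infDist x A :=
        mul_nonneg (by positivity) Metric.infDist_nonneg
      linarith
    have hgA : ∀ x ∈ A, g x = 1 := by
      intro x hx
      simp [hgdef, Metric.infDist_zero_of_mem hx]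
    have hgS : ∀ x, x ∉ S n → g x = 0 := by
      intro x hx
      simp only [hSdef, Set.mem_setOf_eq, not_lt] at hx
      have h1 : 1 / ((n : ℝ) + 1) ≤ infDist x A := hx
      have hn : (0:ℝ) < (n : ℝ) + 1 := by positivity
      have : (1:ℝ) ≤ (n + 1) * infDist x A := by
        rw [div_le_iff₀ hn] at h1
        linarith [h1]
      simp [hgdef, max_eq_left, sub_nonpos.2 this]
    obtain ⟨hl, _⟩ := integral_between_indicators μ hgc hg0 hg1
      hAc.measurableSet (hSopen n).measurableSet hgA hgS
    obtain ⟨_, hr⟩ := integral_between_indicators ν hgc hg0 hg1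
      hAc.measurableSet (hSopen n).measurableSet hgA hgS
    exact hl.trans ((ENNReal.ofReal_le_ofReal (hInt g hgc hgm hg0 hg1)).trans hr)
  -- take the limit in n
  have htend : Filter.Tendsto (ν ∘ S) atTop (nhds (ν A)) := by
    have := tendsto_measure_iInter_atTop (μ := ν)
      (fun n => ((hSopen n).measurableSet).nullMeasurableSet) hSanti
      ⟨0, measure_ne_top ν _⟩
    rwa [hSinter] at this
  have hμAνA : μ A ≤ ν A := ge_of_tendsto' htend key
  calc μ U ≤ μ K + ε := hKm.le
    _ ≤ μ A + ε := add_le_add_left (measure_mono hKA) ε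
    _ ≤ ν A + ε := add_le_add_left hμAνA ε
    _ ≤ ν U + ε := add_le_add_left (measure_mono hAU) ε

/-- Layer cake: stochastic order implies integral comparison for monotone functions. -/
lemma int_of_stochastic (μ ν : Measure X) [IsProbabilityMeasure μ] [IsProbabilityMeasure ν]
    (h : ∀ U : Set X, IsOpen U → IsUpperSet U → μ U ≤ ν U)
    {f : X → ℝ} (hf : Continuous f) (hm : Monotone f) (h0 : ∀ x, 0 ≤ f x)
    (hb : ∃ M : ℝ, ∀ x, f x ≤ M) : ∫ x, f x ∂μ ≤ ∫ x, f x ∂ν := by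
  obtain ⟨M, hM⟩ := hb
  have hfm : AEMeasurable f μ := hf.measurable.aemeasurable
  have hfn : AEMeasurable f ν := hf.measurable.aemeasurable
  have h0μ : 0 ≤ᵐ[μ] f := Filter.Eventually.of_forall h0
  have h0ν : 0 ≤ᵐ[ν] f := Filter.Eventually.of_forall h0
  have lcμ := lintegral_eq_lintegral_meas_lt μ h0μ hfm
  have lcν := lintegral_eq_lintegral_meas_lt ν h0ν hfn
  have hle : ∫⁻ x, ENNReal.ofReal (f x) ∂μ ≤ ∫⁻ x, ENNReal.ofReal (f x) ∂ν := by
    rw [lcμ, lcν]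
    refine lintegral_mono fun t => ?_
    have hopen : IsOpen {a : X | t < f a} := isOpen_lt continuous_const hf
    have hupper : IsUpperSet {a : X | t < f a} := fun x y hxy hx =>
      lt_of_lt_of_le hx (hm hxy)
    exact h _ hopen hupper
  have hfin : ∫⁻ x, ENNReal.ofReal (f x) ∂ν ≠ ∞ := by
    have : ∫⁻ x, ENNReal.ofReal (f x) ∂ν ≤ ∫⁻ _, ENNReal.ofReal M ∂ν :=
      lintegral_mono fun x => ENNReal.ofReal_le_ofReal (hM x)
    refine ne_top_of_le_ne_top ?_ this
    simp [lintegral_const]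
  rw [integral_eq_lintegral_of_nonneg_ae h0μ hf.aestronglyMeasurable,
    integral_eq_lintegral_of_nonneg_ae h0ν hf.aestronglyMeasurable]
  exact ENNReal.toReal_mono hfin hle

end Aux

/-- Let `(X,d)` be a metric space with a closed partial order such that for all `x ≤ y` and all
`x₁` there is `y₁ ≥ x₁` with `d(y,y₁) ≤ d(x,x₁)`. Then for tight Borel probability measures
`μ, ν` the following are equivalent: (1) `μ ≤ ν` in the stochastic order; (2) for every
continuous bounded monotone `f : X → [0,∞)`, `∫ f dμ ≤ ∫ f dν`; (3) for every continuous
bounded antitone `f : X → [0,∞)`, `∫ f dν ≤ ∫ f dμ`. -/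
theorem stochasticOrder_iff_continuous_monotone_iff_continuous_antitone {X : Type*}
    [MetricSpace X] [MeasurableSpace X] [BorelSpace X] [PartialOrder X]
    (hclosed : IsClosed {p : X × X | p.1 ≤ p.2})
    (hprop : ∀ x y x₁ : X, x ≤ y → ∃ y₁ : X, x₁ ≤ y₁ ∧ dist y y₁ ≤ dist x x₁)
    (μ ν : Measure X) [IsProbabilityMeasure μ] [IsProbabilityMeasure ν]
    (hμ : MeasureIsTight μ) (hν : MeasureIsTight ν) :
    ((∀ U : Set X, IsOpen U → IsUpperSet U → μ U ≤ ν U) ↔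
        (∀ f : X → ℝ, Continuous f → Monotone f → (∀ x, 0 ≤ f x) →
          (∃ M : ℝ, ∀ x, f x ≤ M) → ∫ x, f x ∂μ ≤ ∫ x, f x ∂ν)) ∧
      ((∀ U : Set X, IsOpen U → IsUpperSet U → μ U ≤ ν U) ↔
        (∀ f : X → ℝ, Continuous f → Antitone f → (∀ x, 0 ≤ f x) →
          (∃ M : ℝ, ∀ x, f x ≤ M) → ∫ x, f x ∂ν ≤ ∫ x, f x ∂μ)) := by
  have bdd_int : ∀ (κ : Measure X) [IsProbabilityMeasure κ], ∀ f : X → ℝ, Continuous f →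
      (∀ x, 0 ≤ f x) → ∀ M : ℝ, (∀ x, f x ≤ M) → Integrable f κ := by
    intro κ _ f hf h0 M hM
    refine (integrable_const M).mono' hf.aestronglyMeasurable ?_
    exact Filter.Eventually.of_forall fun x => by
      rw [Real.norm_eq_abs, abs_of_nonneg (h0 x)]; exact hM x
  constructor
  · constructor
    · intro h f hf hm h0 hb
      exact int_of_stochastic μ ν h hf hm h0 hb
    · intro h U hU hUu
      exact stochastic_of_int hclosed hprop μ ν hμ
        (fun g hgc hgm hg0 hg1 => h g hgc hgm hg0 ⟨1, hg1⟩) hU hUu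
  · constructor
    · intro h f hf ha h0 hb
      obtain ⟨M, hM⟩ := hb
      have hgm : Monotone (fun x => M - f x) := fun x y hxy => by
        simp only; linarith [ha hxy]
      have hg0 : ∀ x, 0 ≤ M - f x := fun x => by linarith [hM x]
      have hgb : ∃ M' : ℝ, ∀ x, M - f x ≤ M' := ⟨M, fun x => by linarith [h0 x]⟩
      have := int_of_stochastic μ ν h (continuous_const.sub hf) hgm hg0 hgb
      have hfiμ : Integrable f μ := bdd_int μ f hf h0 M hM
      have hfiν : Integrable f ν := bdd_int ν f hf h0 M hM
      simp only [Pi.sub_apply] at this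
      rw [integral_sub (integrable_const M) hfiμ, integral_sub (integrable_const M) hfiν,
        integral_const, integral_const] at this
      simp only [Measure.real, measure_univ, ENNReal.toReal_one, smul_eq_mul, mul_one, one_smul] at this
      linarith
    · intro h U hU hUu
      refine stochastic_of_int hclosed hprop μ ν hμ ?_ hU hUu
      intro g hgc hgm hg0 hg1
      have hac : Continuous (fun x => 1 - g x) := continuous_const.sub hgc
      have haa : Antitone (fun x => 1 - g x) := fun x y hxy => by
        simp only; linarith [hgm hxy]
      have ha0 : ∀ x, 0 ≤ 1 - g x := fun x => by linarith [hg1 x]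
      have hab : ∃ M : ℝ, ∀ x, 1 - g x ≤ M := ⟨1, fun x => by linarith [hg0 x]⟩
      have := h _ hac haa ha0 hab
      have hgiμ : Integrable g μ := bdd_int μ g hgc hg0 1 hg1
      have hgiν : Integrable g ν := bdd_int ν g hgc hg0 1 hg1
      rw [integral_sub (integrable_const 1) hgiν, integral_sub (integrable_const 1) hgiμ,
        integral_const, integral_const] at this
      simp only [Measure.real, measure_univ, ENNReal.toReal_one, smul_eq_mul, mul_one, one_smul] at this
      linarith
end

section
/- Let (X,d) be a metric space equipped with a closed partial order satisfying both: (i) for all x ≤ y and all x₁ ∈ X there exists y₁ ∈ X with x₁ ≤ y₁ and d(y,y₁) ≤ d(x,x₁); and (ii) for all x ≤ y and all y₁ ∈ X there exists x₁ ∈ X with x₁ ≤ y₁ and d(x,x₁) ≤ d(y,y₁). Then X is monotone normal: for every closed upper set A and every closed lower set B with A ∩ B = ∅ there exist an open upper set U ⊇ A and an open lower set V ⊇ B with U ∩ V = ∅; indeed U := {x : d(x,A) < d(x,B)} and V := {x : d(x,A) > d(x,B)} have these properties. -/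
open Metric

/-- Let `(X,d)` be a metric space with a closed partial order satisfying: (i) for all `x ≤ y`
and all `x₁` there is `y₁ ≥ x₁` with `d(y,y₁) ≤ d(x,x₁)`; (ii) for all `x ≤ y` and all `y₁`
there is `x₁ ≤ y₁` with `d(x,x₁) ≤ d(y,y₁)`. Then `X` is monotone normal: disjoint closed
upper and lower sets are separated by disjoint open upper and lower sets; indeed for nonempty
such sets the open sets `U = {x | d(x,A) < d(x,B)}` and `V = {x | d(x,B) < d(x,A)}` work. -/
theorem monotone_normal_of_dist_property {X : Type*} [MetricSpace X] [PartialOrder X]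
    (hclosed : IsClosed {p : X × X | p.1 ≤ p.2})
    (hprop₁ : ∀ x y x₁ : X, x ≤ y → ∃ y₁ : X, x₁ ≤ y₁ ∧ dist y y₁ ≤ dist x x₁)
    (hprop₂ : ∀ x y y₁ : X, x ≤ y → ∃ x₁ : X, x₁ ≤ y₁ ∧ dist x x₁ ≤ dist y y₁) :
    (∀ A B : Set X, IsClosed A → IsUpperSet A → IsClosed B → IsLowerSet B → A ∩ B = ∅ →
        ∃ U V : Set X, IsOpen U ∧ IsUpperSet U ∧ A ⊆ U ∧
          IsOpen V ∧ IsLowerSet V ∧ B ⊆ V ∧ U ∩ V = ∅) ∧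
      (∀ A B : Set X, A.Nonempty → B.Nonempty →
        IsClosed A → IsUpperSet A → IsClosed B → IsLowerSet B → A ∩ B = ∅ →
        IsOpen {x : X | infDist x A < infDist x B} ∧
          IsUpperSet {x : X | infDist x A < infDist x B} ∧
          A ⊆ {x : X | infDist x A < infDist x B} ∧
          IsOpen {x : X | infDist x B < infDist x A} ∧
          IsLowerSet {x : X | infDist x B < infDist x A} ∧
          B ⊆ {x : X | infDist x B < infDist x A} ∧
          {x : X | infDist x A < infDist x B} ∩ {x : X | infDist x B < infDist x A} = ∅) := by
  -- Key monotonicity: for an upper set A, x ≤ y implies infDist y A ≤ infDist x A.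
  have keyA : ∀ (A : Set X), A.Nonempty → IsUpperSet A → ∀ x y : X, x ≤ y →
      infDist y A ≤ infDist x A := by
    intro A hAne hA x y hxy
    by_contra h
    push_neg at h
    obtain ⟨a, haA, ha⟩ := (infDist_lt_iff hAne).mp h
    obtain ⟨y₁, hay₁, hd⟩ := hprop₁ x y a hxy
    exact absurd (infDist_le_dist_of_mem (hA hay₁ haA)) (by linarith)
  -- Key monotonicity: for a lower set B, x ≤ y implies infDist x B ≤ infDist y B.
  have keyB : ∀ (B : Set X), B.Nonempty → IsLowerSet B → ∀ x y : X, x ≤ y →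
      infDist x B ≤ infDist y B := by
    intro B hBne hB x y hxy
    by_contra h
    push_neg at h
    obtain ⟨b, hbB, hb⟩ := (infDist_lt_iff hBne).mp h
    obtain ⟨x₁, hx₁b, hd⟩ := hprop₂ x y b hxy
    exact absurd (infDist_le_dist_of_mem (hB hx₁b hbB)) (by linarith)
  have main : ∀ A B : Set X, A.Nonempty → B.Nonempty →
      IsClosed A → IsUpperSet A → IsClosed B → IsLowerSet B → A ∩ B = ∅ →
      IsOpen {x : X | infDist x A < infDist x B} ∧
        IsUpperSet {x : X | infDist x A < infDist x B} ∧
        A ⊆ {x : X | infDist x A < infDist x B} ∧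
        IsOpen {x : X | infDist x B < infDist x A} ∧
        IsLowerSet {x : X | infDist x B < infDist x A} ∧
        B ⊆ {x : X | infDist x B < infDist x A} ∧
        {x : X | infDist x A < infDist x B} ∩ {x : X | infDist x B < infDist x A} = ∅ := by
    intro A B hAne hBne hAcl hAup hBcl hBlo hdisj
    have hdisj' : ∀ x, x ∈ A → x ∉ B := fun x hx hx' =>
      Set.eq_empty_iff_forall_notMem.mp hdisj x ⟨hx, hx'⟩
    have hdisj'' : ∀ x, x ∈ B → x ∉ A := fun x hx hx' =>
      Set.eq_empty_iff_forall_notMem.mp hdisj x ⟨hx', hx⟩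
    refine ⟨isOpen_lt (continuous_infDist_pt A) (continuous_infDist_pt B), ?_, ?_,
      isOpen_lt (continuous_infDist_pt B) (continuous_infDist_pt A), ?_, ?_, ?_⟩
    · intro x y hxy hx
      exact lt_of_le_of_lt (keyA A hAne hAup x y hxy)
        (lt_of_lt_of_le hx (keyB B hBne hBlo x y hxy))
    · intro a ha
      have h1 : infDist a A = 0 := infDist_zero_of_mem ha
      have h2 : 0 < infDist a B := (hBcl.notMem_iff_infDist_pos hBne).mp (hdisj' a ha)
      simpa [h1] using h2
    · intro y x hxy hy
      exact lt_of_le_of_lt (keyB B hBne hBlo x y hxy)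
        (lt_of_lt_of_le hy (keyA A hAne hAup x y hxy))
    · intro b hb
      have h1 : infDist b B = 0 := infDist_zero_of_mem hb
      have h2 : 0 < infDist b A := (hAcl.notMem_iff_infDist_pos hAne).mp (hdisj'' b hb)
      simpa [h1] using h2
    · ext x
      simp only [Set.mem_inter_iff, Set.mem_setOf_eq, Set.mem_empty_iff_false, iff_false]
      rintro ⟨h1, h2⟩
      exact absurd (h1.trans h2) (lt_irrefl _)
  refine ⟨?_, main⟩
  intro A B hAcl hAup hBcl hBlo hdisj
  rcases A.eq_empty_or_nonempty with rfl | hAne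
  · exact ⟨∅, Set.univ, isOpen_empty, fun _ _ _ h => h, subset_rfl, isOpen_univ,
      fun _ _ _ _ => trivial, Set.subset_univ _, by simp⟩
  rcases B.eq_empty_or_nonempty with rfl | hBne
  · exact ⟨Set.univ, ∅, isOpen_univ, fun _ _ _ _ => trivial, Set.subset_univ _,
      isOpen_empty, fun _ _ _ h => h, subset_rfl, by simp⟩
  obtain ⟨h1, h2, h3, h4, h5, h6, h7⟩ := main A B hAne hBne hAcl hAup hBcl hBlo hdisj
  exact ⟨_, _, h1, h2, h3, h4, h5, h6, h7⟩
end

section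
/- Let (X,d) be a metric space equipped with a closed partial order that is monotone normal, i.e. for every closed upper set A and every closed lower set B with A ∩ B = ∅ there exist an open upper set U ⊇ A and an open lower set V ⊇ B with U ∩ V = ∅. Then for tight Borel probability measures μ, ν on X, μ ≤ ν in the stochastic order if and only if ∫ f dμ ≤ ∫ f dν for every continuous bounded monotone f : X → [0,∞). -/
open MeasureTheory
open scoped ENNReal

section StochOrderAuxSec
open Set Filter Topology
namespace StochOrderAux


variable {X : Type*} [TopologicalSpace X] [PartialOrder X]

/-- Analogue of `Urysohns.CU` for the monotone Urysohn lemma. -/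
structure MCU (X : Type*) [TopologicalSpace X] [PartialOrder X] where
  protected C : Set X
  protected U : Set X
  protected closed_C : IsClosed C
  protected upper_C : IsUpperSet C
  protected open_U : IsOpen U
  protected upper_U : IsUpperSet U
  protected subset : C ⊆ U
  protected hP : ∀ {c u : Set X}, IsClosed c → IsUpperSet c → IsOpen u → IsUpperSet u → c ⊆ u →
    ∃ v w : Set X, IsOpen v ∧ IsUpperSet v ∧ c ⊆ v ∧ IsClosed w ∧ IsUpperSet w ∧ v ⊆ w ∧ w ⊆ u

namespace MCU

noncomputable def V (c : MCU X) : Set X :=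
  (c.hP c.closed_C c.upper_C c.open_U c.upper_U c.subset).choose

noncomputable def W (c : MCU X) : Set X :=
  (c.hP c.closed_C c.upper_C c.open_U c.upper_U c.subset).choose_spec.choose

theorem spec (c : MCU X) :
    IsOpen c.V ∧ IsUpperSet c.V ∧ c.C ⊆ c.V ∧ IsClosed c.W ∧ IsUpperSet c.W ∧ c.V ⊆ c.W ∧
      c.W ⊆ c.U :=
  (c.hP c.closed_C c.upper_C c.open_U c.upper_U c.subset).choose_spec.choose_spec

noncomputable def left (c : MCU X) : MCU X where
  C := c.C
  U := c.V
  closed_C := c.closed_C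
  upper_C := c.upper_C
  open_U := c.spec.1
  upper_U := c.spec.2.1
  subset := c.spec.2.2.1
  hP := c.hP

noncomputable def right (c : MCU X) : MCU X where
  C := c.W
  U := c.U
  closed_C := c.spec.2.2.2.1
  upper_C := c.spec.2.2.2.2.1
  open_U := c.open_U
  upper_U := c.upper_U
  subset := c.spec.2.2.2.2.2.2
  hP := c.hP

theorem left_U_subset_right_C (c : MCU X) : c.left.U ⊆ c.right.C :=
  c.spec.2.2.2.2.2.1

theorem left_U_subset (c : MCU X) : c.left.U ⊆ c.U :=
  Subset.trans c.left_U_subset_right_C c.right.subset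

theorem subset_right_C (c : MCU X) : c.C ⊆ c.right.C :=
  Subset.trans c.left.subset c.left_U_subset_right_C

noncomputable def approx : ℕ → MCU X → X → ℝ
  | 0, c, x => indicator c.Uᶜ 1 x
  | n + 1, c, x => midpoint ℝ (approx n c.left x) (approx n c.right x)

theorem approx_of_mem_C (c : MCU X) (n : ℕ) {x : X} (hx : x ∈ c.C) : c.approx n x = 0 := by
  induction n generalizing c with
  | zero => exact indicator_of_notMem (fun (hU : x ∈ c.Uᶜ) => hU <| c.subset hx) _
  | succ n ihn =>
    simp only [approx]
    rw [ihn, ihn, midpoint_self]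
    exacts [c.subset_right_C hx, hx]

theorem approx_of_nmem_U (c : MCU X) (n : ℕ) {x : X} (hx : x ∉ c.U) : c.approx n x = 1 := by
  induction n generalizing c with
  | zero =>
    rw [← mem_compl_iff] at hx
    exact indicator_of_mem hx _
  | succ n ihn =>
    simp only [approx]
    rw [ihn, ihn, midpoint_self]
    exacts [hx, fun hU => hx <| c.left_U_subset hU]

theorem approx_nonneg (c : MCU X) (n : ℕ) (x : X) : 0 ≤ c.approx n x := by
  induction n generalizing c with
  | zero => exact indicator_nonneg (fun _ _ => zero_le_one) _
  | succ n ihn =>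
    simp only [approx, midpoint_eq_smul_add, invOf_eq_inv]
    refine mul_nonneg (inv_nonneg.2 zero_le_two) (add_nonneg ?_ ?_) <;> apply ihn

theorem approx_le_one (c : MCU X) (n : ℕ) (x : X) : c.approx n x ≤ 1 := by
  induction n generalizing c with
  | zero => exact indicator_apply_le' (fun _ => le_rfl) fun _ => zero_le_one
  | succ n ihn =>
    simp only [approx, midpoint_eq_smul_add, invOf_eq_inv, smul_eq_mul, ← div_eq_inv_mul]
    have := add_le_add (ihn (left c)) (ihn (right c))
    norm_num at this
    exact Iff.mpr (div_le_one zero_lt_two) this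

theorem bddAbove_range_approx (c : MCU X) (x : X) : BddAbove (range fun n => c.approx n x) :=
  ⟨1, fun _ ⟨n, hn⟩ => hn ▸ c.approx_le_one n x⟩

theorem approx_le_approx_of_U_sub_C {c₁ c₂ : MCU X} (h : c₁.U ⊆ c₂.C) (n₁ n₂ : ℕ) (x : X) :
    c₂.approx n₂ x ≤ c₁.approx n₁ x := by
  by_cases hx : x ∈ c₁.U
  · calc
      approx n₂ c₂ x = 0 := approx_of_mem_C _ _ (h hx)
      _ ≤ approx n₁ c₁ x := approx_nonneg _ _ _
  · calc
      approx n₂ c₂ x ≤ 1 := approx_le_one _ _ _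
      _ = approx n₁ c₁ x := (approx_of_nmem_U _ _ hx).symm

theorem approx_mem_Icc_right_left (c : MCU X) (n : ℕ) (x : X) :
    c.approx n x ∈ Icc (c.right.approx n x) (c.left.approx n x) := by
  induction' n with n ihn generalizing c
  · exact ⟨le_rfl, indicator_le_indicator_of_subset (compl_subset_compl.2 c.left_U_subset)
      (fun _ => zero_le_one) _⟩
  · simp only [approx, mem_Icc]
    refine ⟨midpoint_le_midpoint ?_ (ihn _).1, midpoint_le_midpoint (ihn _).2 ?_⟩ <;>
      apply approx_le_approx_of_U_sub_C <;> apply left_U_subset_right_C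

theorem approx_le_succ (c : MCU X) (n : ℕ) (x : X) : c.approx n x ≤ c.approx (n + 1) x := by
  induction' n with n ihn generalizing c
  · exact right_le_midpoint.mpr (approx_mem_Icc_right_left c 0 x).2
  · rw [approx, approx]
    exact midpoint_le_midpoint (ihn _) (ihn _)

theorem approx_mono (c : MCU X) (x : X) : Monotone fun n => c.approx n x :=
  monotone_nat_of_le_succ fun n => c.approx_le_succ n x

theorem approx_antitone (c : MCU X) (n : ℕ) : Antitone (c.approx n) := by
  induction n generalizing c with
  | zero =>
    intro x y hxy
    simp only [approx]
    by_cases hy : y ∈ c.Uᶜ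
    · have hx : x ∈ c.Uᶜ := (c.upper_U.compl) hxy hy
      simp [indicator_of_mem, hx, hy]
    · simp only [indicator_of_notMem hy]
      exact indicator_nonneg (fun _ _ => zero_le_one) _
  | succ n ihn =>
    intro x y hxy
    simp only [approx]
    exact midpoint_le_midpoint (ihn c.left hxy) (ihn c.right hxy)

protected noncomputable def lim (c : MCU X) (x : X) : ℝ :=
  ⨆ n, c.approx n x

theorem tendsto_approx_atTop (c : MCU X) (x : X) :
    Tendsto (fun n => c.approx n x) atTop (𝓝 <| c.lim x) :=
  tendsto_atTop_ciSup (c.approx_mono x) ⟨1, fun _ ⟨_, hn⟩ => hn ▸ c.approx_le_one _ _⟩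

theorem lim_of_mem_C (c : MCU X) (x : X) (h : x ∈ c.C) : c.lim x = 0 := by
  simp only [MCU.lim, approx_of_mem_C, h, ciSup_const]

theorem lim_of_nmem_U (c : MCU X) (x : X) (h : x ∉ c.U) : c.lim x = 1 := by
  simp only [MCU.lim, approx_of_nmem_U c _ h, ciSup_const]

theorem lim_eq_midpoint (c : MCU X) (x : X) :
    c.lim x = midpoint ℝ (c.left.lim x) (c.right.lim x) := by
  refine tendsto_nhds_unique (c.tendsto_approx_atTop x) ((tendsto_add_atTop_iff_nat 1).1 ?_)
  simp only [approx]
  exact (c.left.tendsto_approx_atTop x).midpoint (c.right.tendsto_approx_atTop x)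

theorem approx_le_lim (c : MCU X) (x : X) (n : ℕ) : c.approx n x ≤ c.lim x :=
  le_ciSup (c.bddAbove_range_approx x) _

theorem lim_nonneg (c : MCU X) (x : X) : 0 ≤ c.lim x :=
  (c.approx_nonneg 0 x).trans (c.approx_le_lim x 0)

theorem lim_le_one (c : MCU X) (x : X) : c.lim x ≤ 1 :=
  ciSup_le fun _ => c.approx_le_one _ _

theorem lim_mem_Icc (c : MCU X) (x : X) : c.lim x ∈ Icc (0 : ℝ) 1 :=
  ⟨c.lim_nonneg x, c.lim_le_one x⟩

theorem lim_antitone (c : MCU X) : Antitone c.lim := fun x y hxy =>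
  ciSup_le fun n => (c.approx_antitone n hxy).trans (c.approx_le_lim x n)

theorem continuous_lim (c : MCU X) : Continuous c.lim := by
  obtain ⟨h0, h1234, h1⟩ : 0 < (2⁻¹ : ℝ) ∧ (2⁻¹ : ℝ) < 3 / 4 ∧ (3 / 4 : ℝ) < 1 := by norm_num
  refine
    continuous_iff_continuousAt.2 fun x =>
      (Metric.nhds_basis_closedBall_pow (h0.trans h1234) h1).tendsto_right_iff.2 fun n _ => ?_
  simp only [Metric.mem_closedBall]
  induction' n with n ihn generalizing c
  · filter_upwards with y
    rw [pow_zero]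
    exact Real.dist_le_of_mem_Icc_01 (c.lim_mem_Icc _) (c.lim_mem_Icc _)
  · by_cases hxl : x ∈ c.left.U
    · filter_upwards [IsOpen.mem_nhds c.left.open_U hxl, ihn c.left] with _ hyl hyd
      rw [pow_succ', c.lim_eq_midpoint, c.lim_eq_midpoint,
        c.right.lim_of_mem_C _ (c.left_U_subset_right_C hyl),
        c.right.lim_of_mem_C _ (c.left_U_subset_right_C hxl)]
      refine (dist_midpoint_midpoint_le _ _ _ _).trans ?_
      rw [dist_self, add_zero, div_eq_inv_mul]
      gcongr
    · replace hxl : x ∈ c.left.right.Cᶜ :=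
        compl_subset_compl.2 c.left.right.subset hxl
      filter_upwards [IsOpen.mem_nhds (isOpen_compl_iff.2 c.left.right.closed_C) hxl,
        ihn c.left.right, ihn c.right] with y hyl hydl hydr
      replace hxl : x ∉ c.left.left.U :=
        compl_subset_compl.2 c.left.left_U_subset_right_C hxl
      replace hyl : y ∉ c.left.left.U :=
        compl_subset_compl.2 c.left.left_U_subset_right_C hyl
      simp only [pow_succ, c.lim_eq_midpoint, c.left.lim_eq_midpoint,
        c.left.left.lim_of_nmem_U _ hxl, c.left.left.lim_of_nmem_U _ hyl]
      refine (dist_midpoint_midpoint_le _ _ _ _).trans ?_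
      refine (div_le_div_of_nonneg_right (add_le_add (dist_midpoint_midpoint_le _ _ _ _) le_rfl)
        zero_le_two).trans ?_
      rw [dist_self, zero_add]
      set r := (3 / 4 : ℝ) ^ n
      calc _ ≤ (r / 2 + r) / 2 := by gcongr
        _ = _ := by field_simp; ring

end MCU

theorem isClosed_upperClosure_of_isCompact
    (hclosed : IsClosed {p : X × X | p.1 ≤ p.2}) {K : Set X} (hK : IsCompact K) :
    IsClosed (↑(upperClosure K) : Set X) := by
  rw [← isOpen_compl_iff, isOpen_iff_forall_mem_open]
  intro y hy
  have hsub : K ×ˢ ({y} : Set X) ⊆ {p : X × X | p.1 ≤ p.2}ᶜ := by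
    rintro ⟨a, b⟩ ⟨ha, hb⟩
    rcases hb with rfl
    intro hle
    exact hy (mem_upperClosure.mpr ⟨a, ha, hle⟩)
  obtain ⟨u, v, hu, hv, hKu, hyv, huv⟩ :=
    generalized_tube_lemma hK isCompact_singleton hclosed.isOpen_compl hsub
  refine ⟨v, fun z hz hzmem => ?_, hv, hyv rfl⟩
  obtain ⟨a, haK, hale⟩ := mem_upperClosure.mp hzmem
  exact huv (Set.mk_mem_prod (hKu haK) hz) hale


theorem exists_monotone_urysohn
    (hMN : ∀ A B : Set X, IsClosed A → IsUpperSet A → IsClosed B → IsLowerSet B → A ∩ B = ∅ →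
      ∃ U V : Set X, IsOpen U ∧ IsUpperSet U ∧ A ⊆ U ∧
        IsOpen V ∧ IsLowerSet V ∧ B ⊆ V ∧ U ∩ V = ∅)
    {C U : Set X} (hC : IsClosed C) (hCu : IsUpperSet C)
    (hU : IsOpen U) (hUu : IsUpperSet U) (hsub : C ⊆ U) :
    ∃ f : X → ℝ, Continuous f ∧ Monotone f ∧ (∀ x, f x ∈ Icc (0 : ℝ) 1) ∧
      (∀ x ∈ C, f x = 1) ∧ (∀ x ∉ U, f x = 0) := by
  have hP : ∀ {c u : Set X}, IsClosed c → IsUpperSet c → IsOpen u → IsUpperSet u → c ⊆ u →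
      ∃ v w : Set X, IsOpen v ∧ IsUpperSet v ∧ c ⊆ v ∧ IsClosed w ∧ IsUpperSet w ∧ v ⊆ w ∧
        w ⊆ u := by
    intro c u hc hcu hu huu hcsub
    obtain ⟨U', V', hU'o, hU'u, hcU', hV'o, hV'l, hV'sub, hdisj⟩ :=
      hMN c uᶜ hc hcu hu.isClosed_compl huu.compl
        (by rw [← Set.diff_eq, Set.diff_eq_empty]; exact hcsub)
    exact ⟨U', V'ᶜ, hU'o, hU'u, hcU', hV'o.isClosed_compl, hV'l.compl,
      Set.subset_compl_iff_disjoint_right.mpr (Set.disjoint_iff_inter_eq_empty.mpr hdisj),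
      compl_subset_comm.mpr hV'sub⟩
  let c : MCU X := ⟨C, U, hC, hCu, hU, hUu, hsub, hP⟩
  refine ⟨fun x => 1 - c.lim x, (continuous_const.sub c.continuous_lim), ?_, ?_, ?_, ?_⟩
  · intro x y hxy
    have := c.lim_antitone hxy
    dsimp only
    linarith
  · intro x
    have := c.lim_mem_Icc x
    constructor <;> [skip; skip] <;> simp only [mem_Icc] at this <;> dsimp only <;> linarith
  · intro x hx
    simp [c.lim_of_mem_C x hx]
  · intro x hx
    simp [c.lim_of_nmem_U x hx]

end StochOrderAux
end StochOrderAuxSec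

open StochOrderAux Set Filter Topology in
/-- Let `(X,d)` be a metric space with a closed partial order which is monotone normal:
disjoint closed upper and lower sets can be separated by disjoint open upper and lower sets.
Then for tight Borel probability measures `μ, ν` on `X`, `μ ≤ ν` in the stochastic order
if and only if `∫ f dμ ≤ ∫ f dν` for every continuous bounded monotone `f : X → [0,∞)`. -/
theorem stochasticOrder_iff_continuous_monotone_of_monotoneNormal {X : Type*}
    [MetricSpace X] [MeasurableSpace X] [BorelSpace X] [PartialOrder X]
    (hclosed : IsClosed {p : X × X | p.1 ≤ p.2})
    (hMN : ∀ A B : Set X, IsClosed A → IsUpperSet A → IsClosed B → IsLowerSet B → A ∩ B = ∅ →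
      ∃ U V : Set X, IsOpen U ∧ IsUpperSet U ∧ A ⊆ U ∧
        IsOpen V ∧ IsLowerSet V ∧ B ⊆ V ∧ U ∩ V = ∅)
    (μ ν : Measure X) [IsProbabilityMeasure μ] [IsProbabilityMeasure ν]
    (hμ : MeasureIsTight μ) (hν : MeasureIsTight ν) :
    (∀ U : Set X, IsOpen U → IsUpperSet U → μ U ≤ ν U) ↔
      (∀ f : X → ℝ, Continuous f → Monotone f → (∀ x, 0 ≤ f x) →
        (∃ M : ℝ, ∀ x, f x ≤ M) → ∫ x, f x ∂μ ≤ ∫ x, f x ∂ν) := by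
  
  constructor
  · rintro h f hf hmono hnn ⟨M, hM⟩
    rw [integral_eq_lintegral_of_nonneg_ae (Eventually.of_forall hnn) hf.aestronglyMeasurable,
      integral_eq_lintegral_of_nonneg_ae (Eventually.of_forall hnn) hf.aestronglyMeasurable]
    have key : ∫⁻ x, ENNReal.ofReal (f x) ∂μ ≤ ∫⁻ x, ENNReal.ofReal (f x) ∂ν := by
      rw [lintegral_eq_lintegral_meas_lt μ (Eventually.of_forall hnn)
          hf.measurable.aemeasurable,
        lintegral_eq_lintegral_meas_lt ν (Eventually.of_forall hnn)
          hf.measurable.aemeasurable]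
      refine lintegral_mono fun t => ?_
      exact h _ (isOpen_Ioi.preimage hf) fun a b hab ha => lt_of_lt_of_le ha (hmono hab)
    have hν_top : ∫⁻ x, ENNReal.ofReal (f x) ∂ν ≠ ⊤ := by
      refine ne_of_lt (lt_of_le_of_lt (lintegral_mono fun x =>
        ENNReal.ofReal_le_ofReal (hM x)) ?_)
      rw [lintegral_const]
      exact ENNReal.mul_lt_top ENNReal.ofReal_lt_top (measure_lt_top ν _)
    exact ENNReal.toReal_mono hν_top key
  · intro h U hU hUu
    refine ENNReal.le_of_forall_pos_le_add fun ε hε _ => ?_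
    obtain ⟨K, hKU, hKcomp, hKlt⟩ := hμ U hU.measurableSet ε (ENNReal.coe_pos.mpr hε)
    set A := (↑(upperClosure K) : Set X) with hA
    have hAclosed := isClosed_upperClosure_of_isCompact hclosed hKcomp
    have hAupper : IsUpperSet A := (upperClosure K).upper
    have hAU : A ⊆ U := by
      intro y hy
      obtain ⟨x, hxK, hxy⟩ := mem_upperClosure.mp hy
      exact hUu hxy (hKU hxK)
    obtain ⟨f, hfc, hfm, hf01, hf1, hf0⟩ :=
      exists_monotone_urysohn hMN hAclosed hAupper hU hUu hAU
    have hfnn : ∀ x, 0 ≤ f x := fun x => (hf01 x).1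
    have hint := h f hfc hfm hfnn ⟨1, fun x => (hf01 x).2⟩
    rw [integral_eq_lintegral_of_nonneg_ae (Eventually.of_forall hfnn) hfc.aestronglyMeasurable,
      integral_eq_lintegral_of_nonneg_ae (Eventually.of_forall hfnn)
        hfc.aestronglyMeasurable] at hint
    have hb : ∀ (ρ : Measure X) [IsProbabilityMeasure ρ],
        ∫⁻ x, ENNReal.ofReal (f x) ∂ρ ≤ 1 := by
      intro ρ _
      calc ∫⁻ x, ENNReal.ofReal (f x) ∂ρ ≤ ∫⁻ _, 1 ∂ρ :=
            lintegral_mono fun x => by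
              simpa using ENNReal.ofReal_le_ofReal (hf01 x).2
        _ = 1 := by simp
    have hlint : ∫⁻ x, ENNReal.ofReal (f x) ∂μ ≤ ∫⁻ x, ENNReal.ofReal (f x) ∂ν :=
      (ENNReal.toReal_le_toReal (ne_of_lt (lt_of_le_of_lt (hb μ) ENNReal.one_lt_top))
        (ne_of_lt (lt_of_le_of_lt (hb ν) ENNReal.one_lt_top))).mp hint
    have h1 : μ K ≤ ∫⁻ x, ENNReal.ofReal (f x) ∂μ := by
      rw [← lintegral_indicator_one hKcomp.isClosed.measurableSet]
      refine lintegral_mono fun x => ?_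
      by_cases hx : x ∈ K
      · simp [hx, hf1 x (subset_upperClosure hx)]
      · simp [hx]
    have h2 : ∫⁻ x, ENNReal.ofReal (f x) ∂ν ≤ ν U := by
      rw [← lintegral_indicator_one hU.measurableSet]
      refine lintegral_mono fun x => ?_
      by_cases hx : x ∈ U
      · simpa [hx] using ENNReal.ofReal_le_ofReal (hf01 x).2
      · simp [hx, hf0 x hx]
    calc μ U ≤ μ K + ε := hKlt.le
      _ ≤ ν U + ε := add_le_add (h1.trans (hlint.trans h2)) le_rfl
end

section
/- Let E be a separable real Banach space and C ⊆ E a nonempty open convex cone whose closure C̄ is a proper normal cone, with the induced partial order x ≤ y iff y − x ∈ C̄. Then the σ-algebra on C generated by the collection of all open upper subsets of C (upper with respect to the order restricted to C) equals the Borel σ-algebra of C. -/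
/-- Let `E` be a separable real Banach space and `C` a nonempty open convex cone whose closure
is a proper normal cone, inducing the order `x ≤ y ↔ y - x ∈ closure C`. Then the σ-algebra
on `C` generated by the open upper subsets of `C` is the Borel σ-algebra of `C`. -/
theorem generateFrom_openUpperSets_eq_borel {E : Type*} [NormedAddCommGroup E]
    [NormedSpace ℝ E] [CompleteSpace E] [TopologicalSpace.SeparableSpace E]
    (C : Set E) (hCne : C.Nonempty) (hCopen : IsOpen C)
    (hadd : ∀ x ∈ C, ∀ y ∈ C, x + y ∈ C)
    (hsmul : ∀ t : ℝ, 0 < t → ∀ x ∈ C, t • x ∈ C)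
    (hproper : closure C ∩ (-(closure C)) = {0})
    (hnormal : ∃ K : ℝ, ∀ x y : E, x ∈ closure C → y - x ∈ closure C → ‖x‖ ≤ K * ‖y‖) :
    MeasurableSpace.generateFrom
        {U : Set C | IsOpen U ∧
          ∀ x y : C, x ∈ U → (y : E) - (x : E) ∈ closure C → y ∈ U} =
      borel C := by
  classical
  obtain ⟨u, hu⟩ := hCne
  obtain ⟨ρ, hρ, hball⟩ := Metric.isOpen_iff.mp hCopen u hu
  obtain ⟨K₀, hK₀⟩ := hnormal
  set K : ℝ := max K₀ 0 with hKdef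
  have hK0 : 0 ≤ K := le_max_right _ _
  have hK : ∀ x y : E, x ∈ closure C → y - x ∈ closure C → ‖x‖ ≤ K * ‖y‖ := by
    intro x y hx hyx
    exact (hK₀ x y hx hyx).trans
      (mul_le_mul_of_nonneg_right (le_max_left _ _) (norm_nonneg _))
  -- open cone plus closure is in the open cone
  have haddCl : ∀ x ∈ C, ∀ y ∈ closure C, x + y ∈ C := by
    intro x hx y hy
    obtain ⟨δ, hδ, hballx⟩ := Metric.isOpen_iff.mp hCopen x hx
    obtain ⟨c, hcC, hc⟩ := Metric.mem_closure_iff.mp hy δ hδ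
    have h1 : x + y - c ∈ C := by
      apply hballx
      simp only [Metric.mem_ball, dist_eq_norm]
      have : x + y - c - x = y - c := by abel
      rw [this]
      rwa [dist_eq_norm] at hc
    have := hadd _ h1 _ hcC
    simpa using this
  -- closure of cone is closed under addition
  have hclAdd : ∀ x ∈ closure C, ∀ y ∈ closure C, x + y ∈ closure C := by
    intro x hx y hy
    rw [mem_closure_iff_seq_limit] at hx ⊢
    obtain ⟨f, hf, hfx⟩ := hx
    exact ⟨fun n => f n + y, fun n => haddCl _ (hf n) _ hy,
      hfx.add tendsto_const_nhds⟩
  -- scaled balls around ε • u are in C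
  have hsball : ∀ ε : ℝ, 0 < ε → ∀ v : E, ‖v - ε • u‖ < ε * ρ → v ∈ C := by
    intro ε hε v hv
    have h1 : ε⁻¹ • v ∈ C := by
      apply hball
      simp only [Metric.mem_ball, dist_eq_norm]
      have : ε⁻¹ • v - u = ε⁻¹ • (v - ε • u) := by
        rw [smul_sub, smul_smul, inv_mul_cancel₀ hε.ne', one_smul]
      rw [this, norm_smul, norm_inv, Real.norm_eq_abs, abs_of_pos hε]
      calc ε⁻¹ * ‖v - ε • u‖ < ε⁻¹ * (ε * ρ) := by
            exact mul_lt_mul_of_pos_left hv (inv_pos.mpr hε)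
        _ = ρ := by field_simp
    have := hsmul ε hε _ h1
    rwa [smul_smul, mul_inv_cancel₀ hε.ne', one_smul] at this
  -- the order intervals
  set W : E → ℝ → Set C := fun a ε =>
    {y : C | (y : E) - (a - ε • u) ∈ C ∧ (a + ε • u) - (y : E) ∈ closure C} with hWdef
  set S : Set (Set C) :=
    {U : Set C | IsOpen U ∧
      ∀ x y : C, x ∈ U → (y : E) - (x : E) ∈ closure C → y ∈ U} with hSdef
  -- measurability of W
  have hWmeas : ∀ (a : E) (ε : ℝ),
      @MeasurableSet _ (MeasurableSpace.generateFrom S) (W a ε) := by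
    intro a ε
    have hU₁ : ({y : C | (y : E) - (a - ε • u) ∈ C} : Set C) ∈ S := by
      constructor
      · exact hCopen.preimage ((continuous_subtype_val).sub continuous_const)
      · intro x y hx hyx
        have : (y : E) - (a - ε • u) = ((x : E) - (a - ε • u)) + ((y : E) - (x : E)) := by
          abel
        simp only [Set.mem_setOf_eq] at hx ⊢
        rw [this]
        exact haddCl _ hx _ hyx
    have hU₂ : ({y : C | (a + ε • u) - (y : E) ∉ closure C} : Set C) ∈ S := by
      constructor
      · exact isClosed_closure.isOpen_compl.preimage
          (continuous_const.sub continuous_subtype_val)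
      · intro x y hx hyx
        simp only [Set.mem_setOf_eq] at hx ⊢
        intro hy
        apply hx
        have : (a + ε • u) - (x : E) = ((a + ε • u) - (y : E)) + ((y : E) - (x : E)) := by
          abel
        rw [this]
        exact hclAdd _ hy _ hyx
    have hWeq : W a ε = {y : C | (y : E) - (a - ε • u) ∈ C} ∩
        {y : C | (a + ε • u) - (y : E) ∉ closure C}ᶜ := by
      ext y
      simp [hWdef, Set.mem_setOf_eq]
    rw [hWeq]
    exact (MeasurableSpace.measurableSet_generateFrom hU₁).inter
      (MeasurableSpace.measurableSet_generateFrom hU₂).compl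
  -- small balls are inside W
  have hballW : ∀ (a : E) (ε : ℝ), 0 < ε → ∀ y : C, ‖(y : E) - a‖ < ε * ρ → y ∈ W a ε := by
    intro a ε hε y hy
    constructor
    · apply hsball ε hε
      have : (y : E) - (a - ε • u) - ε • u = (y : E) - a := by abel
      rwa [this]
    · apply subset_closure
      apply hsball ε hε
      have : (a + ε • u) - (y : E) - ε • u = -((y : E) - a) := by abel
      rw [this, norm_neg]
      exact hy
  -- W is inside a ball (normality)
  have hWball : ∀ (a : E) (ε : ℝ), 0 < ε → ∀ z : C, z ∈ W a ε →
      ‖(z : E) - a‖ ≤ ε * ((2 * K + 1) * ‖u‖) := by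
    intro a ε hε z hz
    have hx : (z : E) - (a - ε • u) ∈ closure C := subset_closure hz.1
    have hyx : (2 * ε) • u - ((z : E) - (a - ε • u)) ∈ closure C := by
      have : (2 * ε) • u - ((z : E) - (a - ε • u)) = (a + ε • u) - (z : E) := by
        rw [two_mul, add_smul]; abel
      rw [this]
      exact hz.2
    have h1 := hK _ _ hx hyx
    rw [norm_smul, Real.norm_eq_abs, abs_of_pos (by linarith : (0:ℝ) < 2 * ε)] at h1
    have h2 : ‖(z : E) - a‖ ≤ ‖(z : E) - (a - ε • u)‖ + ‖ε • u‖ := by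
      have : (z : E) - a = ((z : E) - (a - ε • u)) + (-(ε • u)) := by abel
      rw [this]
      exact (norm_add_le _ _).trans (by rw [norm_neg])
    rw [norm_smul, Real.norm_eq_abs, abs_of_pos hε] at h2
    calc ‖(z : E) - a‖ ≤ K * (2 * ε * ‖u‖) + ε * ‖u‖ := by linarith
      _ = ε * ((2 * K + 1) * ‖u‖) := by ring
  -- main argument
  refine le_antisymm (MeasurableSpace.generateFrom_le ?_) ?_
  · intro U hU
    exact MeasurableSpace.measurableSet_generateFrom hU.1
  · rw [borel]
    apply MeasurableSpace.generateFrom_le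
    intro G hG
    simp only [Set.mem_setOf_eq] at hG
    obtain ⟨D, hDcount, hDdense⟩ := TopologicalSpace.exists_countable_dense E
    set T : Set (E × ℚ) := {p | p.1 ∈ D ∧ 0 < p.2 ∧ W p.1 (p.2 : ℝ) ⊆ G} with hTdef
    have hTcount : T.Countable := by
      apply Set.Countable.mono _ (hDcount.prod (Set.countable_univ (α := ℚ)))
      intro p hp
      exact ⟨hp.1, Set.mem_univ _⟩
    have hGeq : G = ⋃ p ∈ T, W p.1 (p.2 : ℝ) := by
      apply Set.Subset.antisymm
      · intro y hy
        obtain ⟨r, hr, hrball⟩ := Metric.isOpen_iff.mp hG y hy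
        set c : ℝ := (2 * K + 1) * ‖u‖ + ρ with hcdef
        have hc : 0 < c := by
          have h1 : 0 ≤ (2 * K + 1) * ‖u‖ := by positivity
          linarith
        obtain ⟨ε, hε0, hεr⟩ : ∃ ε : ℚ, 0 < ε ∧ (ε : ℝ) * c < r := by
          obtain ⟨q, hq0, hq⟩ := exists_rat_btwn (show (0:ℝ) < r / c by positivity)
          refine ⟨q, by exact_mod_cast hq0, ?_⟩
          rwa [lt_div_iff₀ hc] at hq
        have hε0' : (0:ℝ) < (ε : ℝ) := by exact_mod_cast hε0
        obtain ⟨a, haD, hay⟩ := Metric.mem_closure_iff.mp (hDdense (y : E)) ((ε : ℝ) * ρ)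
          (by positivity)
        rw [dist_eq_norm] at hay
        have hyW : y ∈ W a (ε : ℝ) := hballW a _ hε0' y hay
        have hWG : W a (ε : ℝ) ⊆ G := by
          intro z hz
          apply hrball
          simp only [Metric.mem_ball, Subtype.dist_eq, dist_eq_norm]
          have h1 := hWball a _ hε0' z hz
          have h2 : ‖(z : E) - (y : E)‖ ≤ ‖(z : E) - a‖ + ‖(y : E) - a‖ := by
            have : (z : E) - (y : E) = ((z : E) - a) - ((y : E) - a) := by abel
            rw [this]
            exact norm_sub_le _ _
          have : ‖(z : E) - (y : E)‖ < (ε : ℝ) * c := by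
            rw [hcdef, mul_add]
            linarith
          linarith
        exact Set.mem_biUnion (show (a, ε) ∈ T from ⟨haD, hε0, hWG⟩) hyW
      · intro y hy
        simp only [Set.mem_iUnion] at hy
        obtain ⟨p, hp, hyp⟩ := hy
        exact hp.2.2 hyp
    rw [hGeq]
    exact MeasurableSet.biUnion hTcount (fun p _ => hWmeas p.1 p.2)
end

section
/- Let E be a real Banach space and C ⊆ E a nonempty open convex cone whose closure C̄ is a proper normal cone, with the induced partial order x ≤ y iff y − x ∈ C̄. If μ and ν are tight Borel probability measures on C such that μ(U) ≤ ν(U) and ν(U) ≤ μ(U) for every open upper subset U of C, then μ = ν. Consequently the stochastic order on the tight Borel probability measures on C is a partial order. -/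
open MeasureTheory TopologicalSpace
open scoped ENNReal

/-- An open set closed under addition absorbs its closure. -/
lemma cone_add_closure' {E : Type*} [NormedAddCommGroup E] (C : Set E) (hCopen : IsOpen C)
    (hadd : ∀ x ∈ C, ∀ y ∈ C, x + y ∈ C) :
    ∀ c ∈ C, ∀ v ∈ closure C, c + v ∈ C := by
  intro c hc v hv
  obtain ⟨r, hr, hball⟩ := Metric.isOpen_iff.1 hCopen c hc
  obtain ⟨b, hbC, hdist⟩ := Metric.mem_closure_iff.1 hv r hr
  have h1 : c + (v - b) ∈ C := by
    apply hball
    simp only [Metric.mem_ball, dist_eq_norm, add_sub_cancel_left]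
    rw [← dist_eq_norm, dist_comm]; rwa [dist_comm] at hdist
  have h2 : c + v = (c + (v - b)) + b := by abel
  rw [h2]
  exact hadd _ h1 _ hbC

lemma sep_helper' {E : Type*} [NormedAddCommGroup E] [NormedSpace ℝ E]
    (C : Set E) (hCopen : IsOpen C)
    (hsmul : ∀ t : ℝ, 0 < t → ∀ x ∈ C, t • x ∈ C)
    {e : E} (he : e ∈ C) {D : Set E} {a b : E}
    (ha : a ∈ closure D) (hb : b - a ∉ closure C) :
    ∃ d ∈ D, ∃ q : ℚ, 0 < q ∧ a - (d - (q : ℝ) • e) ∈ C ∧ b - (d - (q : ℝ) • e) ∉ C := by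
  have hcl : IsClosed (closure C) := isClosed_closure
  have hne : (closure C).Nonempty := ⟨e, subset_closure he⟩
  have hδ : 0 < Metric.infDist (b - a) (closure C) :=
    (hcl.notMem_iff_infDist_pos hne).1 hb
  set δ := Metric.infDist (b - a) (closure C) with hδdef
  have hM : (0:ℝ) < ‖e‖ + 1 := by positivity
  obtain ⟨q, hq0, hq1⟩ : ∃ q : ℚ, (0:ℝ) < q ∧ (q:ℝ) < δ / (2 * (‖e‖ + 1)) := by
    obtain ⟨q, h1, h2⟩ := exists_rat_btwn (show (0:ℝ) < δ / (2 * (‖e‖ + 1)) by positivity)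
    exact ⟨q, h1, h2⟩
  have hq0' : (0:ℚ) < q := by exact_mod_cast hq0
  have hqe : (q : ℝ) • e ∈ C := hsmul _ hq0 _ he
  obtain ⟨r, hr0, hball⟩ := Metric.isOpen_iff.1 hCopen _ hqe
  have hr'0 : 0 < min r (δ / 2) := lt_min hr0 (by positivity)
  obtain ⟨d, hdD, hdd⟩ := Metric.mem_closure_iff.1 ha _ hr'0
  refine ⟨d, hdD, q, hq0', ?_, ?_⟩
  · apply hball
    have : a - (d - (q : ℝ) • e) = (a - d) + (q:ℝ) • e := by abel
    rw [this]
    simp only [Metric.mem_ball, dist_eq_norm, add_sub_cancel_right]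
    calc ‖a - d‖ = dist a d := (dist_eq_norm a d).symm
      _ < min r (δ / 2) := hdd
      _ ≤ r := min_le_left _ _
  · intro hmem
    have h1 : Metric.infDist (b - a) (closure C) ≤ dist (b - a) (b - (d - (q : ℝ) • e)) :=
      Metric.infDist_le_dist_of_mem (subset_closure hmem)
    have h2 : dist (b - a) (b - (d - (q : ℝ) • e)) = ‖(d - a) - (q:ℝ) • e‖ := by
      rw [dist_eq_norm]
      congr 1
      abel
    have h3 : ‖(d - a) - (q:ℝ) • e‖ ≤ ‖d - a‖ + ‖(q:ℝ) • e‖ := norm_sub_le _ _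
    have h4 : ‖d - a‖ < δ / 2 := by
      rw [← dist_eq_norm, dist_comm]
      exact lt_of_lt_of_le hdd (min_le_right _ _)
    have h5 : ‖(q:ℝ) • e‖ < δ / 2 := by
      rw [norm_smul, Real.norm_eq_abs, abs_of_pos hq0]
      have : (q:ℝ) * ‖e‖ ≤ (q:ℝ) * (‖e‖ + 1) := by nlinarith
      have h6 : (q:ℝ) * (‖e‖ + 1) < (δ / (2 * (‖e‖ + 1))) * (‖e‖ + 1) := by
        exact mul_lt_mul_of_pos_right hq1 hM
      have h7 : (δ / (2 * (‖e‖ + 1))) * (‖e‖ + 1) = δ / 2 := by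
        field_simp
      linarith
    rw [h2] at h1
    linarith




/-- Let `E` be a real Banach space and `C` a nonempty open convex cone whose closure is a
proper normal cone, inducing the order `x ≤ y ↔ y - x ∈ closure C`. If `μ` and `ν` are tight
Borel probability measures on `C` with `μ ≤ ν` and `ν ≤ μ` in the stochastic order (i.e.
`μ U ≤ ν U` and `ν U ≤ μ U` for every open upper subset `U` of `C`), then `μ = ν`; hence the
stochastic order on tight Borel probability measures on `C` is a partial order. -/
theorem stochasticOrder_antisymm {E : Type*} [NormedAddCommGroup E] [NormedSpace ℝ E]
    [CompleteSpace E] [MeasurableSpace E] [BorelSpace E]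
    (C : Set E) (hCne : C.Nonempty) (hCopen : IsOpen C)
    (hadd : ∀ x ∈ C, ∀ y ∈ C, x + y ∈ C)
    (hsmul : ∀ t : ℝ, 0 < t → ∀ x ∈ C, t • x ∈ C)
    (hproper : closure C ∩ (-(closure C)) = {0})
    (hnormal : ∃ K : ℝ, ∀ x y : E, x ∈ closure C → y - x ∈ closure C → ‖x‖ ≤ K * ‖y‖)
    (μ ν : Measure C) [IsProbabilityMeasure μ] [IsProbabilityMeasure ν]
    (hμ : MeasureIsTight μ) (hν : MeasureIsTight ν)
    (hμν : ∀ U : Set C, IsOpen U →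
      (∀ x y : C, x ∈ U → (y : E) - (x : E) ∈ closure C → y ∈ U) → μ U ≤ ν U)
    (hνμ : ∀ U : Set C, IsOpen U →
      (∀ x y : C, x ∈ U → (y : E) - (x : E) ∈ closure C → y ∈ U) → ν U ≤ μ U) :
    μ = ν := by
  classical
  obtain ⟨e, he⟩ := hCne
  have hCC : ∀ c ∈ C, ∀ v ∈ closure C, c + v ∈ C := cone_add_closure' C hCopen hadd
  -- the π-system of open upper sets
  set S : Set (Set C) :=
    {U | IsOpen U ∧ ∀ x y : C, x ∈ U → (y : E) - (x : E) ∈ closure C → y ∈ U} with hSdef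
  have hSpi : IsPiSystem S := by
    rintro U ⟨hUo, hUu⟩ V ⟨hVo, hVu⟩ -
    exact ⟨hUo.inter hVo, fun x y hx hxy => ⟨hUu x y hx.1 hxy, hVu x y hx.2 hxy⟩⟩
  have h_le : MeasurableSpace.generateFrom S ≤ (inferInstance : MeasurableSpace C) :=
    MeasurableSpace.generateFrom_le fun U hU => hU.1.measurableSet
  have hgen : ∀ s : Set C, MeasurableSet[MeasurableSpace.generateFrom S] s → μ s = ν s := by
    intro s hs
    refine @MeasurableSpace.induction_on_inter _ (MeasurableSpace.generateFrom S)
      (fun t _ => μ t = ν t) S rfl hSpi (by simp) ?_ ?_ ?_ s hs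
    · intro t ht
      exact le_antisymm (hμν t ht.1 ht.2) (hνμ t ht.1 ht.2)
    · intro t htm heq
      have htm' := h_le _ htm
      rw [measure_compl htm' (measure_ne_top μ t), measure_compl htm' (measure_ne_top ν t),
        measure_univ, measure_univ, heq]
    · intro f hdisj hm hC
      rw [measure_iUnion hdisj fun i => h_le _ (hm i),
        measure_iUnion hdisj fun i => h_le _ (hm i)]
      exact tsum_congr hC
  -- a σ-compact set of full measure for both μ and ν
  have hεpos : ∀ n : ℕ, (0:ℝ≥0∞) < ((n+1 : ℕ) : ℝ≥0∞)⁻¹ :=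
    fun n => ENNReal.inv_pos.2 (ENNReal.natCast_ne_top _)
  choose Kμ hKμsub hKμc hKμ3 using fun n : ℕ =>
    hμ Set.univ MeasurableSet.univ _ (hεpos n)
  choose Kν hKνsub hKνc hKν3 using fun n : ℕ =>
    hν Set.univ MeasurableSet.univ _ (hεpos n)
  set T : Set C := (⋃ n, Kμ n) ∪ ⋃ n, Kν n with hTdef
  have hTm : MeasurableSet T :=
    ((MeasurableSet.iUnion fun n => (hKμc n).isClosed.measurableSet).union
      (MeasurableSet.iUnion fun n => (hKνc n).isClosed.measurableSet))
  have hfullmeas : ∀ (ρ : Measure C) (K : ℕ → Set C), (∀ n, K n ⊆ T) →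
      (∀ n, ρ Set.univ < ρ (K n) + ((n+1 : ℕ) : ℝ≥0∞)⁻¹) → [IsProbabilityMeasure ρ] → ρ T = 1 := by
    intro ρ K hKT h3 hprob
    refine le_antisymm (le_trans (measure_mono (Set.subset_univ T)) measure_univ.le) ?_
    rw [← measure_univ (μ := ρ)]
    refine ENNReal.le_of_forall_pos_le_add fun ε hε hT => ?_
    obtain ⟨n, hn⟩ := ENNReal.exists_inv_nat_lt
      (show ((ε : ℝ≥0∞)) ≠ 0 by exact_mod_cast hε.ne')
    have hmono : ((n+1 : ℕ) : ℝ≥0∞)⁻¹ ≤ ((n : ℕ) : ℝ≥0∞)⁻¹ := by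
      apply ENNReal.inv_le_inv'
      exact_mod_cast Nat.le_succ n
    calc ρ Set.univ ≤ ρ (K n) + ((n+1 : ℕ) : ℝ≥0∞)⁻¹ := (h3 n).le
      _ ≤ ρ T + ε := add_le_add (measure_mono (hKT n)) (hmono.trans hn.le)
  have hμT : μ T = 1 :=
    hfullmeas μ Kμ (fun n => (Set.subset_union_left).trans' (Set.subset_iUnion _ n)) hKμ3
  have hνT : ν T = 1 :=
    hfullmeas ν Kν (fun n => (Set.subset_union_right).trans' (Set.subset_iUnion _ n)) hKν3
  have hfull : ∀ (ρ : Measure C), ρ T = 1 → [IsProbabilityMeasure ρ] → ∀ B : Set C,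
      ρ (B ∩ T) = ρ B := by
    intro ρ hρT hprob B
    have h0 : ρ Tᶜ = 0 := by
      rw [measure_compl hTm (measure_ne_top ρ T), hρT, measure_univ, tsub_self]
    have h1 : ρ (B \ T) = 0 :=
      le_antisymm (le_trans (measure_mono (Set.diff_subset_compl B T)) h0.le) zero_le
    rw [← measure_inter_add_diff B hTm, h1, add_zero]
  -- E-level picture of T
  set T_E : Set E := Subtype.val '' T with hTEdef
  have hTE_eq : T_E = (⋃ n, Subtype.val '' Kμ n) ∪ ⋃ n, Subtype.val '' Kν n := by
    rw [hTEdef, hTdef, Set.image_union, Set.image_iUnion, Set.image_iUnion]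
  have hTEsep : IsSeparable T_E := by
    rw [hTE_eq]
    exact (isSeparable_iUnion.2 fun n =>
        ((hKμc n).image continuous_subtype_val).isSeparable).union
      (isSeparable_iUnion.2 fun n => ((hKνc n).image continuous_subtype_val).isSeparable)
  have hTEm : MeasurableSet T_E := by
    rw [hTE_eq]
    exact (MeasurableSet.iUnion fun n =>
        ((hKμc n).image continuous_subtype_val).isClosed.measurableSet).union
      (MeasurableSet.iUnion fun n =>
        ((hKνc n).image continuous_subtype_val).isClosed.measurableSet)
  obtain ⟨D, hDc, hTED⟩ := id hTEsep
  haveI : Countable ↥D := hDc.to_subtype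
  -- the countable separating family of open upper sets
  set z : ↥D × ℚ → E := fun p => (p.1 : E) - (p.2 : ℝ) • e with hzdef
  set P : ↥D × ℚ → Set E := fun i => {w | w - z i ∈ C} with hPdef
  have hPopen : ∀ i, IsOpen (P i) := fun i =>
    hCopen.preimage (continuous_id.sub continuous_const)
  set U : ↥D × ℚ → Set C := fun i => Subtype.val ⁻¹' P i with hUdef
  have hUS : ∀ i, U i ∈ S := by
    intro i
    refine ⟨(hPopen i).preimage continuous_subtype_val, fun x y hx hxy => ?_⟩
    have h2 : (y : E) - z i = ((x : E) - z i) + ((y : E) - (x : E)) := by abel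
    show (y : E) - z i ∈ C
    rw [h2]
    exact hCC _ hx _ hxy
  -- the family separates points of T_E
  have hsep : ∀ a ∈ T_E, ∀ b ∈ T_E, (∀ i, a ∈ P i ↔ b ∈ P i) → a = b := by
    intro a ha b hb hiff
    by_contra hab
    have hdich : b - a ∉ closure C ∨ a - b ∉ closure C := by
      by_contra h'
      push_neg at h'
      have hmem : b - a ∈ closure C ∩ (-(closure C)) :=
        ⟨h'.1, by rw [Set.mem_neg]; simpa [neg_sub] using h'.2⟩
      rw [hproper] at hmem
      exact hab (sub_eq_zero.1 (Set.mem_singleton_iff.1 hmem)).symm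
    rcases hdich with h1 | h1
    · obtain ⟨d, hd, q, hq, hmem1, hmem2⟩ := sep_helper' C hCopen hsmul he (hTED ha) h1
      exact hmem2 ((hiff (⟨d, hd⟩, q)).1 hmem1)
    · obtain ⟨d, hd, q, hq, hmem1, hmem2⟩ := sep_helper' C hCopen hsmul he (hTED hb) h1
      exact hmem2 ((hiff (⟨d, hd⟩, q)).2 hmem1)
  -- the standard Borel space `Y`
  set Y : Set E := closure T_E with hYdef
  haveI : CompleteSpace ↥Y := isClosed_closure.completeSpace_coe
  haveI : SeparableSpace ↥Y := hTEsep.closure.separableSpace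
  haveI : SecondCountableTopology ↥Y := UniformSpace.secondCountable_of_separable _
  haveI : PolishSpace ↥Y := inferInstance
  -- the maps into the Cantor-like space
  set g : ↥Y → (↥D × ℚ) → Bool := fun y i => decide ((y : E) ∈ P i) with hgdef
  have hgm : Measurable g := by
    refine measurable_pi_lambda _ fun i => measurable_to_countable' fun b => ?_
    have hop : MeasurableSet (Subtype.val ⁻¹' P i : Set ↥Y) :=
      ((hPopen i).preimage continuous_subtype_val).measurableSet
    cases b
    · have : (fun y : ↥Y => decide ((y : E) ∈ P i)) ⁻¹' {false} =
          (Subtype.val ⁻¹' P i : Set ↥Y)ᶜ := by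
        ext y; simp [decide_eq_false_iff_not]
      rw [this]; exact hop.compl
    · have : (fun y : ↥Y => decide ((y : E) ∈ P i)) ⁻¹' {true} =
          (Subtype.val ⁻¹' P i : Set ↥Y) := by
        ext y; simp [decide_eq_true_eq]
      rw [this]; exact hop
  set f : ↥C → (↥D × ℚ) → Bool := fun x i => decide ((x : E) ∈ P i) with hfdef
  have hfm : Measurable[MeasurableSpace.generateFrom S] f := by
    letI m0 : MeasurableSpace ↥C := MeasurableSpace.generateFrom S
    refine measurable_pi_lambda _ fun i => measurable_to_countable' fun b => ?_
    have hUm : MeasurableSet[MeasurableSpace.generateFrom S] (U i) :=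
      MeasurableSpace.measurableSet_generateFrom (hUS i)
    cases b
    · have : (fun x : ↥C => decide ((x : E) ∈ P i)) ⁻¹' {false} = (U i)ᶜ := by
        ext x; simp [hUdef, decide_eq_false_iff_not]
      rw [this]; exact hUm.compl
    · have : (fun x : ↥C => decide ((x : E) ∈ P i)) ⁻¹' {true} = U i := by
        ext x; simp [hUdef, decide_eq_true_eq]
      rw [this]; exact hUm
  -- conclude
  refine Measure.ext fun A hA => ?_
  set A_E : Set E := Subtype.val '' A with hAEdef
  have hAE : MeasurableSet A_E := hCopen.measurableSet.subtype_image hA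
  set SA : Set ↥Y := Subtype.val ⁻¹' (A_E ∩ T_E) with hSAdef
  have hSA : MeasurableSet SA := (hAE.inter hTEm).preimage measurable_subtype_coe
  have hInj : Set.InjOn g SA := by
    intro y1 h1 y2 h2 hgy
    apply Subtype.ext
    refine hsep _ h1.2 _ h2.2 fun i => ?_
    have := congrFun hgy i
    simpa [hgdef, decide_eq_decide] using this
  have hB : MeasurableSet (g '' SA) := hSA.image_of_measurable_injOn hgm hInj
  have hMgen : MeasurableSet[MeasurableSpace.generateFrom S] (f ⁻¹' (g '' SA)) := hfm hB
  have hAT : A ∩ T = (f ⁻¹' (g '' SA)) ∩ T := by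
    ext x
    constructor
    · rintro ⟨hxA, hxT⟩
      refine ⟨?_, hxT⟩
      have hxY : (x : E) ∈ Y := subset_closure ⟨x, hxT, rfl⟩
      exact ⟨⟨(x : E), hxY⟩, ⟨⟨x, hxA, rfl⟩, ⟨x, hxT, rfl⟩⟩, rfl⟩
    · rintro ⟨hxM, hxT⟩
      obtain ⟨y, hySA, hgy⟩ := hxM
      have hyx : (y : E) = (x : E) := by
        refine hsep _ hySA.2 _ ⟨x, hxT, rfl⟩ fun i => ?_
        have := congrFun hgy i
        simpa [hgdef, hfdef, decide_eq_decide] using this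
      have hxAE : (x : E) ∈ A_E := hyx ▸ hySA.1
      obtain ⟨x', hx', hvx⟩ := hxAE
      have hxx : x' = x := Subtype.ext hvx
      exact ⟨hxx ▸ hx', hxT⟩
  calc μ A = μ (A ∩ T) := (hfull μ hμT A).symm
    _ = μ ((f ⁻¹' (g '' SA)) ∩ T) := by rw [hAT]
    _ = μ (f ⁻¹' (g '' SA)) := hfull μ hμT _
    _ = ν (f ⁻¹' (g '' SA)) := hgen _ hMgen
    _ = ν ((f ⁻¹' (g '' SA)) ∩ T) := (hfull ν hνT _).symm
    _ = ν (A ∩ T) := by rw [hAT]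
    _ = ν A := hfull ν hνT A
end

section
/- Let (X,d) be a metric space equipped with a closed partial order satisfying both: (i) for all x ≤ y and all x₁ ∈ X there exists y₁ ∈ X with x₁ ≤ y₁ and d(y,y₁) ≤ d(x,x₁); and (ii) for all x ≤ y and all y₁ ∈ X there exists x₁ ∈ X with x₁ ≤ y₁ and d(x,x₁) ≤ d(y,y₁). Suppose (μₙ) and (νₙ) are sequences of tight Borel probability measures on X converging weakly to tight Borel probability measures μ and ν respectively, and μₙ ≤ νₙ in the stochastic order for every n. Then μ ≤ ν in the stochastic order. In other words, the stochastic order is a closed subset of the product of the spaces of tight Borel probability measures with the weak topology. -/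
open MeasureTheory Filter Topology
open scoped ENNReal

/-- Let `(X,d)` be a metric space with a closed partial order satisfying the two metric-order
compatibility properties (i) and (ii). If `(μₙ)` and `(νₙ)` are sequences of tight Borel
probability measures converging weakly to tight Borel probability measures `μ` and `ν`,
and `μₙ ≤ νₙ` in the stochastic order for all `n`, then `μ ≤ ν` in the stochastic order;
i.e. the stochastic order is closed for the weak topology. -/
theorem stochasticOrder_closed_under_weak_convergence {X : Type*} [MetricSpace X]
    [MeasurableSpace X] [BorelSpace X] [PartialOrder X]
    (hclosed : IsClosed {p : X × X | p.1 ≤ p.2})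
    (hprop₁ : ∀ x y x₁ : X, x ≤ y → ∃ y₁ : X, x₁ ≤ y₁ ∧ dist y y₁ ≤ dist x x₁)
    (hprop₂ : ∀ x y y₁ : X, x ≤ y → ∃ x₁ : X, x₁ ≤ y₁ ∧ dist x x₁ ≤ dist y y₁)
    (μs νs : ℕ → Measure X) (μ ν : Measure X)
    (hμs : ∀ n, IsProbabilityMeasure (μs n)) (hνs : ∀ n, IsProbabilityMeasure (νs n))
    [IsProbabilityMeasure μ] [IsProbabilityMeasure ν]
    (hμst : ∀ n, MeasureIsTight (μs n)) (hνst : ∀ n, MeasureIsTight (νs n))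
    (hμt : MeasureIsTight μ) (hνt : MeasureIsTight ν)
    (hμconv : ∀ f : X → ℝ, Continuous f → (∃ M : ℝ, ∀ x, |f x| ≤ M) →
      Tendsto (fun n => ∫ x, f x ∂(μs n)) atTop (𝓝 (∫ x, f x ∂μ)))
    (hνconv : ∀ f : X → ℝ, Continuous f → (∃ M : ℝ, ∀ x, |f x| ≤ M) →
      Tendsto (fun n => ∫ x, f x ∂(νs n)) atTop (𝓝 (∫ x, f x ∂ν)))
    (hle : ∀ n, ∀ U : Set X, IsOpen U → IsUpperSet U → μs n U ≤ νs n U) :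
    ∀ U : Set X, IsOpen U → IsUpperSet U → μ U ≤ ν U := by
  intro U hU hUup
  -- Promote to `ProbabilityMeasure` and obtain weak convergence in the topological sense.
  let P : ℕ → ProbabilityMeasure X := fun n => ⟨μs n, hμs n⟩
  let Q : ℕ → ProbabilityMeasure X := fun n => ⟨νs n, hνs n⟩
  let Pl : ProbabilityMeasure X := ⟨μ, ‹_›⟩
  let Ql : ProbabilityMeasure X := ⟨ν, ‹_›⟩
  have hPconv : Tendsto P atTop (𝓝 Pl) := by
    rw [ProbabilityMeasure.tendsto_iff_forall_integral_tendsto]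
    intro f
    exact hμconv f f.continuous ⟨‖f‖, fun x => by
      simpa [Real.norm_eq_abs] using f.norm_coe_le_norm x⟩
  have hQconv : Tendsto Q atTop (𝓝 Ql) := by
    rw [ProbabilityMeasure.tendsto_iff_forall_integral_tendsto]
    intro f
    exact hνconv f f.continuous ⟨‖f‖, fun x => by
      simpa [Real.norm_eq_abs] using f.norm_coe_le_norm x⟩
  -- Reduce to an ε-approximation.
  apply ENNReal.le_of_forall_pos_le_add
  intro ε hε _
  have hε' : (0 : ℝ≥0∞) < ε := by exact_mod_cast hε
  -- Find a compact K ⊆ U with μ U < μ K + ε.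
  obtain ⟨K, hKU, hKc, hK⟩ := hμt U hU.measurableSet ε hε'
  -- Find δ > 0 with the δ-thickening of K inside U.
  obtain ⟨δ, hδ, hthick⟩ := hKc.exists_thickening_subset_open hU hKU
  -- The upper closure of K.
  set T : Set X := {y | ∃ x ∈ K, x ≤ y} with hT
  have hKT : K ⊆ T := fun x hx => ⟨x, hx, le_refl x⟩
  -- The open set V : half-thickening of T.
  set V : Set X := Metric.thickening (δ / 2) T with hV
  have hVopen : IsOpen V := Metric.isOpen_thickening
  have hVupper : IsUpperSet V := by
    intro y y' hyy' hy
    rw [hV, Metric.mem_thickening_iff] at hy ⊢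
    obtain ⟨z, ⟨k, hk, hkz⟩, hdz⟩ := hy
    obtain ⟨y₁, hzy₁, hd⟩ := hprop₁ y y' z hyy'
    exact ⟨y₁, ⟨k, hk, hkz.trans hzy₁⟩, lt_of_le_of_lt hd hdz⟩
  have hKV : K ⊆ V := hKT.trans (Metric.self_subset_thickening (by linarith) T)
  -- thickening δ T ⊆ U, using property (ii).
  have hTU : Metric.thickening δ T ⊆ U := by
    intro y hy
    rw [Metric.mem_thickening_iff] at hy
    obtain ⟨z, ⟨k, hk, hkz⟩, hdz⟩ := hy
    obtain ⟨x₁, hx₁y, hd⟩ := hprop₂ k z y hkz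
    have hx₁ : x₁ ∈ Metric.thickening δ K := by
      rw [Metric.mem_thickening_iff]
      exact ⟨k, hk, by rw [dist_comm]; exact lt_of_le_of_lt hd (by rwa [dist_comm] at hdz)⟩
    exact hUup hx₁y (hthick hx₁)
  have hclV : closure V ⊆ U := by
    refine subset_trans ?_ hTU
    refine (Metric.closure_thickening_subset_cthickening _ _).trans ?_
    exact Metric.cthickening_subset_thickening' hδ (by linarith) T
  -- Portmanteau chain.
  have h1 : μ V ≤ atTop.liminf fun n => μs n V :=
    ProbabilityMeasure.le_liminf_measure_open_of_tendsto hPconv hVopen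
  have h2 : (atTop.liminf fun n => μs n V) ≤ atTop.liminf fun n => νs n V :=
    liminf_le_liminf (Eventually.of_forall fun n => hle n V hVopen hVupper)
  have h3 : (atTop.liminf fun n => νs n V) ≤ atTop.limsup fun n => νs n (closure V) := by
    refine le_trans (liminf_le_liminf (Eventually.of_forall fun n =>
      measure_mono (subset_closure (s := V)))) liminf_le_limsup
  have h4 : (atTop.limsup fun n => νs n (closure V)) ≤ ν (closure V) :=
    ProbabilityMeasure.limsup_measure_closed_le_of_tendsto hQconv isClosed_closure
  calc μ U ≤ μ K + ε := hK.le
    _ ≤ μ V + ε := add_le_add_left (measure_mono hKV) ε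
    _ ≤ ν (closure V) + ε := add_le_add_left (h1.trans (h2.trans (h3.trans h4))) ε
    _ ≤ ν U + ε := add_le_add_left (measure_mono hclV) ε
end

section
/- Let 𝒜 be a separable unital C*-algebra, P its set of positive invertible elements, and μ₁, …, μₙ Borel probability measures on P. Then ℋ(μ₁,…,μₙ) ≤ 𝒜(μ₁,…,μₙ) in the stochastic order on Borel probability measures on P. -/
open MeasureTheory

/-- The stochastic order for Borel (probability) measures concentrated on the set
`P = {a : A | 0 ≤ a ∧ IsUnit a}` of positive invertible elements: `μ ≤ ν` iff
`μ U ≤ ν U` for every subset `U` of `P` that is open in `P` and an upper set in `P`. -/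
def StochasticOrderOnPosInv {A : Type*} [CStarAlgebra A] [PartialOrder A] [StarOrderedRing A]
    [MeasurableSpace A] (μ ν : Measure A) : Prop :=
  ∀ U : Set A, U ⊆ {a : A | 0 ≤ a ∧ IsUnit a} →
    (∃ V : Set A, IsOpen V ∧ U = V ∩ {a : A | 0 ≤ a ∧ IsUnit a}) →
    (∀ x ∈ U, ∀ y : A, 0 ≤ y → IsUnit y → x ≤ y → y ∈ U) →
    μ U ≤ ν U


open scoped NNReal in
/-- Key quadratic inequality: for `u` positive invertible and `x` self-adjoint,
`2x ≤ u⁻¹ + x u x`. -/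
lemma amhm_quad {A : Type*} [CStarAlgebra A] [PartialOrder A] [StarOrderedRing A]
    (u : Aˣ) (hu : 0 ≤ (u : A)) (x : A) (hx : IsSelfAdjoint x) :
    x + x ≤ (↑u⁻¹ : A) + x * ↑u * x := by
  have hs : 0 ∉ spectrum ℝ≥0 (u : A) := u.zero_notMem_spectrum ℝ≥0
  set p : A := (u : A) ^ ((1:ℝ)/2) with hp_def
  set q : A := (u : A) ^ (-((1:ℝ)/2)) with hq_def
  have hp : 0 ≤ p := CFC.rpow_nonneg
  have hq : 0 ≤ q := CFC.rpow_nonneg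
  have hpq : p * q = 1 := by
    rw [hp_def, hq_def, ← CFC.rpow_add u.isUnit]
    norm_num [CFC.rpow_zero (u : A)]
  have hqp : q * p = 1 := by
    rw [hp_def, hq_def, ← CFC.rpow_add u.isUnit]
    norm_num [CFC.rpow_zero (u : A)]
  have hpp : p * p = (u : A) := by
    rw [hp_def, ← CFC.rpow_add u.isUnit]
    norm_num [CFC.rpow_one (u : A)]
  have hqq : q * q = (↑u⁻¹ : A) := by
    rw [hq_def, ← CFC.rpow_add u.isUnit]
    norm_num [CFC.rpow_neg_one_eq_inv u hu]
  have hstar : star (p * x - q) = x * p - q := by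
    rw [star_sub, star_mul, hx.star_eq, (IsSelfAdjoint.of_nonneg hp).star_eq,
      (IsSelfAdjoint.of_nonneg hq).star_eq]
  have expand : star (p * x - q) * (p * x - q) = x * ↑u * x - x - x + ↑u⁻¹ := by
    rw [hstar]
    have : (x * p - q) * (p * x - q)
        = x * (p * p) * x - x * (p * q) - (q * p) * x + q * q := by noncomm_ring
    rw [this, hpp, hpq, hqp, hqq, mul_one, one_mul]
  have h0 : (0 : A) ≤ x * ↑u * x - x - x + ↑u⁻¹ := expand ▸ star_mul_self_nonneg _
  rw [← sub_nonneg]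
  convert h0 using 1
  noncomm_ring

/-- AM-HM inequality for `n` positive invertible elements of a C*-algebra. -/
lemma amhm {A : Type*} [CStarAlgebra A] [PartialOrder A] [StarOrderedRing A]
    {n : ℕ} (hn : 0 < n) (a : Fin n → A) (ha : ∀ j, 0 ≤ a j) (hua : ∀ j, IsUnit (a j)) :
    Ring.inverse ((n : ℂ)⁻¹ • ∑ j, Ring.inverse (a j)) ≤ (n : ℂ)⁻¹ • ∑ j, a j := by
  have hn' : (n : ℝ) ≠ 0 := Nat.cast_ne_zero.mpr hn.ne'
  choose u hu using hua
  have j0 : Fin n := ⟨0, hn⟩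
  set s : A := ∑ j, a j with hs_def
  have hs0 : 0 ≤ s := Finset.sum_nonneg fun j _ => ha j
  have hsu : IsUnit s :=
    CStarAlgebra.isUnit_of_le (a j0)
      (Finset.single_le_sum (fun j _ => ha j) (Finset.mem_univ j0))
      ⟨ha j0, ((hu j0) ▸ (u j0).isUnit : IsUnit (a j0))⟩
  obtain ⟨S, hS⟩ := hsu
  have hinv : ∀ j, Ring.inverse (a j) = ((↑(u j)⁻¹ : A)) := fun j => by
    rw [← hu j, Ring.inverse_unit]
  have hinv_nonneg : ∀ j, 0 ≤ (↑(u j)⁻¹ : A) := fun j =>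
    CFC.inv_nonneg_of_nonneg (u j) ((hu j) ▸ ha j)
  set h : A := ∑ j, Ring.inverse (a j) with hh_def
  have hh0 : 0 ≤ h := Finset.sum_nonneg fun j _ => (hinv j) ▸ hinv_nonneg j
  have hhu : IsUnit h :=
    CStarAlgebra.isUnit_of_le (↑(u j0)⁻¹ : A)
      ((hinv j0) ▸ Finset.single_le_sum (fun j _ => (hinv j) ▸ hinv_nonneg j)
        (Finset.mem_univ j0))
      ⟨hinv_nonneg j0, ((u j0)⁻¹).isUnit⟩
  obtain ⟨H, hH⟩ := hhu
  have hSinv0 : 0 ≤ (↑S⁻¹ : A) := CFC.inv_nonneg_of_nonneg S (hS ▸ hs0)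
  set x : A := (n : ℝ) • (↑S⁻¹ : A) with hx_def
  have hx : IsSelfAdjoint x := IsSelfAdjoint.smul (star_trivial _) (.of_nonneg hSinv0)
  have key : ∀ j, x + x ≤ (↑(u j)⁻¹ : A) + x * a j * x := fun j => by
    have := amhm_quad (u j) ((hu j) ▸ ha j) x hx
    rwa [hu j] at this
  have hxsx : x * s * x = ((n : ℝ)^2) • (↑S⁻¹ : A) := by
    rw [hx_def, smul_mul_assoc, smul_mul_assoc, mul_smul_comm, smul_smul, ← hS]
    rw [Units.inv_mul, one_mul]
    ring_nf
  have sum_key : (2 * (n : ℝ)^2) • (↑S⁻¹ : A) ≤ h + ((n : ℝ)^2) • (↑S⁻¹ : A) := by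
    have h1 : ∑ _j : Fin n, (x + x) ≤ ∑ j, ((↑(u j)⁻¹ : A) + x * a j * x) :=
      Finset.sum_le_sum fun j _ => key j
    have h2 : ∑ _j : Fin n, (x + x) = (2 * (n : ℝ)^2) • (↑S⁻¹ : A) := by
      rw [Finset.sum_const, Finset.card_univ, Fintype.card_fin,
        ← Nat.cast_smul_eq_nsmul ℝ, hx_def]
      module
    have h3 : ∑ j, ((↑(u j)⁻¹ : A) + x * a j * x) = h + x * s * x := by
      rw [Finset.sum_add_distrib]
      congr 1
      · exact Finset.sum_congr rfl fun j _ => (hinv j).symm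
      · rw [hs_def, Finset.mul_sum, Finset.sum_mul]
    rw [h2, h3, hxsx] at h1
    exact h1
  have step : ((n : ℝ)^2) • (↑S⁻¹ : A) ≤ h := by
    rw [show (2 * (n : ℝ)^2) = (n : ℝ)^2 + (n : ℝ)^2 by ring, add_smul] at sum_key
    exact le_of_add_le_add_right sum_key
  -- the unit `T` with value `(n : ℝ)^2 • S⁻¹`
  have hn2 : ((n : ℝ)^2) ≠ 0 := pow_ne_zero _ hn'
  set T : Aˣ := ⟨((n : ℝ)^2) • (↑S⁻¹ : A), (((n : ℝ)^2)⁻¹) • (↑S : A),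
    by rw [smul_mul_assoc, mul_smul_comm, smul_smul, mul_inv_cancel₀ hn2, Units.inv_mul, one_smul],
    by rw [smul_mul_assoc, mul_smul_comm, smul_smul, inv_mul_cancel₀ hn2, Units.mul_inv, one_smul]⟩
    with hT_def
  have hT0 : 0 ≤ (↑T : A) := smul_nonneg (by positivity) hSinv0
  have hTH : (↑T : A) ≤ (↑H : A) := by rw [hH]; exact step
  have inv_le : (↑H⁻¹ : A) ≤ (↑T⁻¹ : A) := CStarAlgebra.inv_le_inv hT0 hTH
  have hTinv : (↑T⁻¹ : A) = (((n : ℝ)^2)⁻¹) • (↑S : A) := rfl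
  -- identify the scalar `(n : ℂ)⁻¹` with the real scalar `(n : ℝ)⁻¹`
  have hscalar : ∀ y : A, (n : ℂ)⁻¹ • y = ((n : ℝ)⁻¹) • y := fun y => by
    rw [show ((n : ℂ)⁻¹) = (((n : ℝ)⁻¹ : ℝ) : ℂ) by push_cast; ring, Complex.coe_smul]
  -- the unit `C` with value `(n : ℝ)⁻¹ • h`
  set C : Aˣ := ⟨((n : ℝ)⁻¹) • h, (n : ℝ) • (↑H⁻¹ : A),
    by rw [smul_mul_assoc, mul_smul_comm, smul_smul, inv_mul_cancel₀ hn', ← hH,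
      Units.mul_inv, one_smul],
    by rw [smul_mul_assoc, mul_smul_comm, smul_smul, mul_inv_cancel₀ hn', ← hH,
      Units.inv_mul, one_smul]⟩ with hC_def
  have hCinv : Ring.inverse (((n : ℝ)⁻¹) • h) = (n : ℝ) • (↑H⁻¹ : A) := Ring.inverse_unit C
  rw [hscalar, hscalar, hCinv]
  calc (n : ℝ) • (↑H⁻¹ : A) ≤ (n : ℝ) • (↑T⁻¹ : A) :=
        smul_le_smul_of_nonneg_left inv_le (by positivity)
    _ = ((n : ℝ)⁻¹) • s := by
        rw [hTinv, smul_smul, hS]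
        congr 1
        field_simp

theorem harmonicMean_le_arithmeticMean' {A : Type*} [CStarAlgebra A] [PartialOrder A]
    [StarOrderedRing A] [TopologicalSpace.SeparableSpace A] [MeasurableSpace A] [BorelSpace A]
    (n : ℕ) (hn : 0 < n) (μ : Fin n → Measure A)
    (hprob : ∀ j, IsProbabilityMeasure (μ j))
    (hconc : ∀ j, μ j {a : A | 0 ≤ a ∧ IsUnit a} = 1) :
    ∀ U : Set A, U ⊆ {a : A | 0 ≤ a ∧ IsUnit a} →
    (∃ V : Set A, IsOpen V ∧ U = V ∩ {a : A | 0 ≤ a ∧ IsUnit a}) →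
    (∀ x ∈ U, ∀ y : A, 0 ≤ y → IsUnit y → x ≤ y → y ∈ U) →
    ((Measure.pi μ).map
        (fun a : Fin n → A => Ring.inverse ((n : ℂ)⁻¹ • ∑ j, Ring.inverse (a j)))) U ≤
    ((Measure.pi μ).map (fun a : Fin n → A => (n : ℂ)⁻¹ • ∑ j, a j)) U := by
  haveI := hprob
  intro U hUP hUopen hUupper
  have hPmeas : MeasurableSet {a : A | 0 ≤ a ∧ IsUnit a} := by
    rw [show {a : A | 0 ≤ a ∧ IsUnit a} = {a : A | 0 ≤ a} ∩ {a : A | IsUnit a} from rfl]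
    exact (CStarAlgebra.isClosed_nonneg.measurableSet).inter Units.isOpen.measurableSet
  obtain ⟨V, hV, hUV⟩ := hUopen
  have hUmeas : MeasurableSet U := hUV ▸ hV.measurableSet.inter hPmeas
  set g := fun a : Fin n → A => (n : ℂ)⁻¹ • ∑ j, a j with hg_def
  have hg : Measurable g :=
    ((continuous_finset_sum Finset.univ fun j _ => continuous_apply j).const_smul
      ((n : ℂ)⁻¹)).measurable
  set f := fun a : Fin n → A => Ring.inverse ((n : ℂ)⁻¹ • ∑ j, Ring.inverse (a j)) with hf_def
  set π := Measure.pi μ with hπ_def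
  set Sp : Set (Fin n → A) := Set.univ.pi fun _ : Fin n => {a : A | 0 ≤ a ∧ IsUnit a}
    with hSp_def
  have hSpmeas : MeasurableSet Sp := MeasurableSet.univ_pi fun _ => hPmeas
  have hSpfull : π Spᶜ = 0 := by
    have h1 : π Sp = 1 := by
      rw [hSp_def, Measure.pi_pi]
      simp [hconc]
    rw [measure_compl hSpmeas (measure_ne_top π _), h1, measure_univ, tsub_self]
  have hsub : f ⁻¹' U ∩ Sp ⊆ g ⁻¹' U := by
    rintro a ⟨hfa, haSp⟩
    have haP : ∀ j, 0 ≤ a j ∧ IsUnit (a j) := fun j => haSp j (Set.mem_univ j)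
    have hs0 : 0 ≤ ∑ j, a j := Finset.sum_nonneg fun j _ => (haP j).1
    have hga0 : 0 ≤ g a := by
      show 0 ≤ (n : ℂ)⁻¹ • ∑ j, a j
      rw [show ((n : ℂ)⁻¹) = (((n : ℝ)⁻¹ : ℝ) : ℂ) by push_cast; ring, Complex.coe_smul]
      exact smul_nonneg (by positivity) hs0
    have hgau : IsUnit (g a) := by
      have j0 : Fin n := ⟨0, hn⟩
      have hsu : IsUnit (∑ j, a j) :=
        CStarAlgebra.isUnit_of_le (a j0)
          (Finset.single_le_sum (fun j _ => (haP j).1) (Finset.mem_univ j0))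
          ⟨(haP j0).1, (haP j0).2⟩
      obtain ⟨S, hS⟩ := hsu
      have hnc : ((n : ℂ)⁻¹) ≠ 0 := by
        simp [Nat.cast_ne_zero, hn.ne']
      exact ⟨⟨(n : ℂ)⁻¹ • (S : A), ((n : ℂ)⁻¹)⁻¹ • (↑S⁻¹ : A),
        by rw [smul_mul_assoc, mul_smul_comm, smul_smul, mul_inv_cancel₀ hnc,
          Units.mul_inv, one_smul],
        by rw [smul_mul_assoc, mul_smul_comm, smul_smul, inv_mul_cancel₀ hnc,
          Units.inv_mul, one_smul]⟩, by simp [hS, hg_def]⟩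
    exact hUupper _ hfa (g a) hga0 hgau (amhm hn a (fun j => (haP j).1) (fun j => (haP j).2))
  by_cases hf : AEMeasurable f π
  · rw [Measure.map_apply_of_aemeasurable hf hUmeas, Measure.map_apply hg hUmeas]
    calc π (f ⁻¹' U) ≤ π ((f ⁻¹' U ∩ Sp) ∪ Spᶜ) :=
          measure_mono (fun x hx => by by_cases hxS : x ∈ Sp <;> simp [hxS, hx])
      _ ≤ π (f ⁻¹' U ∩ Sp) + π Spᶜ := measure_union_le _ _
      _ = π (f ⁻¹' U ∩ Sp) := by rw [hSpfull, add_zero]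
      _ ≤ π (g ⁻¹' U) := measure_mono hsub
  · rw [Measure.map_of_not_aemeasurable hf]
    simp

/-- Let `A` be a separable unital C*-algebra with its canonical order, and
`P = {a : A | 0 ≤ a ∧ IsUnit a}` its set of positive invertible elements (on which
`Ring.inverse` is the genuine inversion `a ↦ a⁻¹`). For Borel probability measures
`μ₁, …, μₙ` on `P`, the harmonic mean `ℋ(μ₁,…,μₙ)` (push-forward of `μ₁ × ⋯ × μₙ` under
`(a₁,…,aₙ) ↦ ((1/n)∑ aⱼ⁻¹)⁻¹`) is dominated by the arithmetic mean `𝒜(μ₁,…,μₙ)`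
(push-forward under `(a₁,…,aₙ) ↦ (1/n)∑ aⱼ`) in the stochastic order on measures on `P`. -/
theorem harmonicMean_le_arithmeticMean {A : Type*} [CStarAlgebra A] [PartialOrder A]
    [StarOrderedRing A] [TopologicalSpace.SeparableSpace A] [MeasurableSpace A] [BorelSpace A]
    (n : ℕ) (hn : 0 < n) (μ : Fin n → Measure A)
    (hprob : ∀ j, IsProbabilityMeasure (μ j))
    (hconc : ∀ j, μ j {a : A | 0 ≤ a ∧ IsUnit a} = 1) :
    StochasticOrderOnPosInv
      ((Measure.pi μ).map
        (fun a : Fin n → A => Ring.inverse ((n : ℂ)⁻¹ • ∑ j, Ring.inverse (a j))))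
      ((Measure.pi μ).map (fun a : Fin n → A => (n : ℂ)⁻¹ • ∑ j, a j)) :=
  harmonicMean_le_arithmeticMean' n hn μ hprob hconc
end

section
/- Let 𝒜 be a separable unital C*-algebra, P its set of positive invertible elements, and let μ₁, …, μₙ and ν₁, …, νₙ be tight Borel probability measures on P with μⱼ ≤ νⱼ in the stochastic order for each j = 1, …, n. Then 𝒜(μ₁,…,μₙ) ≤ 𝒜(ν₁,…,νₙ) and ℋ(μ₁,…,μₙ) ≤ ℋ(ν₁,…,νₙ) in the stochastic order. -/
open MeasureTheory
open scoped ENNReal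

/-- Tightness (inner regularity) for a Borel measure concentrated on the metric space
`P = {a : A | 0 ≤ a ∧ IsUnit a}`: every Borel subset of `P` can be approximated in measure
from inside by compact subsets. -/
def TightOnPosInv {A : Type*} [CStarAlgebra A] [PartialOrder A] [StarOrderedRing A]
    [MeasurableSpace A] (μ : Measure A) : Prop :=
  ∀ B : Set A, B ⊆ {a : A | 0 ≤ a ∧ IsUnit a} → MeasurableSet B → ∀ ε : ℝ≥0∞, 0 < ε →
    ∃ K ⊆ B, IsCompact K ∧ μ B < μ K + ε

section Aux

set_option linter.unusedSectionVars false

variable {A : Type*} [CStarAlgebra A] [PartialOrder A] [StarOrderedRing A]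

lemma mySmul_nonneg {r : ℝ} (hr : 0 ≤ r) {a : A} (ha : 0 ≤ a) : 0 ≤ (r : ℂ) • a := by
  rw [Complex.coe_smul]
  obtain ⟨t, ht⟩ : ∃ t : ℝ, t * t = r := ⟨Real.sqrt r, Real.mul_self_sqrt hr⟩
  have h := star_left_conjugate_nonneg ha (t • (1 : A))
  have hstar : star (t • (1 : A)) = t • (1 : A) := by
    rw [star_smul, star_trivial, star_one]
  rw [hstar] at h
  calc (0 : A) ≤ (t • (1:A)) * a * (t • (1:A)) := h
    _ = r • a := by
        rw [smul_mul_assoc, one_mul, mul_smul_comm, mul_one, smul_smul, ht]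

lemma mySmul_mono {r : ℝ} (hr : 0 ≤ r) {a b : A} (h : a ≤ b) : (r : ℂ) • a ≤ (r : ℂ) • b := by
  rw [← sub_nonneg, ← smul_sub]
  exact mySmul_nonneg hr (sub_nonneg.mpr h)

lemma mySmul_isUnit {r : ℝ} (hr : r ≠ 0) {a : A} (ha : IsUnit a) : IsUnit ((r : ℂ) • a) := by
  rw [Algebra.smul_def]
  exact (IsUnit.map (algebraMap ℂ A) (isUnit_iff_ne_zero.mpr (by exact_mod_cast hr))).mul ha

lemma myInv_mem {a : A} (h0 : 0 ≤ a) (hu : IsUnit a) :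
    0 ≤ Ring.inverse a ∧ IsUnit (Ring.inverse a) := by
  lift a to Aˣ using hu
  rw [Ring.inverse_unit]
  exact ⟨CFC.inv_nonneg_of_nonneg a h0, (a⁻¹).isUnit⟩

lemma myInv_antitone {a b : A} (h0 : 0 ≤ a) (hu : IsUnit a) (hbu : IsUnit b) (h : a ≤ b) :
    Ring.inverse b ≤ Ring.inverse a := by
  lift a to Aˣ using hu
  lift b to Aˣ using hbu
  rw [Ring.inverse_unit, Ring.inverse_unit]
  exact CStarAlgebra.inv_le_inv h0 h

lemma myUnitsOpen : IsOpen {x : A | IsUnit x} := Units.isOpen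

lemma myPosClosed : IsClosed {x : A | 0 ≤ x} := isClosed_le continuous_const continuous_id

lemma myInvContOn : ContinuousOn (Ring.inverse : A → A) {x : A | IsUnit x} := by
  intro x hx
  have := NormedRing.inverse_continuousAt hx.unit
  rw [IsUnit.unit_spec] at this
  exact this.continuousWithinAt

lemma myInvMeasurable [MeasurableSpace A] [BorelSpace A] :
    Measurable (Ring.inverse : A → A) := by
  apply measurable_of_isOpen
  intro s hs
  classical
  have h1 : MeasurableSet ({x : A | IsUnit x} ∩ Ring.inverse ⁻¹' s) :=
    (myInvContOn.isOpen_inter_preimage myUnitsOpen hs).measurableSet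
  have h2 : {x : A | IsUnit x}ᶜ ∩ Ring.inverse ⁻¹' s
      = if (0 : A) ∈ s then {x : A | IsUnit x}ᶜ else ∅ := by
    split
    · ext x; simp only [Set.mem_inter_iff, Set.mem_compl_iff, Set.mem_setOf_eq, Set.mem_preimage]
      exact ⟨fun h => h.1, fun h => ⟨h, by rwa [Ring.inverse_non_unit x h]⟩⟩
    · ext x; simp only [Set.mem_inter_iff, Set.mem_compl_iff, Set.mem_setOf_eq, Set.mem_preimage,
        Set.mem_empty_iff_false, iff_false]
      rintro ⟨h, hmem⟩
      rw [Ring.inverse_non_unit x h] at hmem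
      exact ‹(0:A) ∉ s› hmem
  have hsplit : Ring.inverse ⁻¹' s = ({x : A | IsUnit x} ∩ Ring.inverse ⁻¹' s)
      ∪ ({x : A | IsUnit x}ᶜ ∩ Ring.inverse ⁻¹' s) := by
    rw [← Set.union_inter_distrib_right, Set.union_compl_self, Set.univ_inter]
  rw [hsplit, h2]
  apply h1.union
  split
  · exact myUnitsOpen.measurableSet.compl
  · exact MeasurableSet.empty

lemma csmul_nonneg (N : ℕ) {a : A} (ha : 0 ≤ a) : 0 ≤ ((N : ℂ))⁻¹ • a := by
  have hc : ((N : ℂ))⁻¹ = (((N : ℝ)⁻¹ : ℝ) : ℂ) := by push_cast; ring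
  rw [hc]
  exact mySmul_nonneg (by positivity) ha

lemma csmul_mono (N : ℕ) {a b : A} (h : a ≤ b) : ((N : ℂ))⁻¹ • a ≤ ((N : ℂ))⁻¹ • b := by
  have hc : ((N : ℂ))⁻¹ = (((N : ℝ)⁻¹ : ℝ) : ℂ) := by push_cast; ring
  rw [hc]
  exact mySmul_mono (by positivity) h

lemma csmul_isUnit {N : ℕ} (hN : N ≠ 0) {a : A} (ha : IsUnit a) :
    IsUnit (((N : ℂ))⁻¹ • a) := by
  have hc : ((N : ℂ))⁻¹ = (((N : ℝ)⁻¹ : ℝ) : ℂ) := by push_cast; ring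
  rw [hc]
  have : (N : ℝ)⁻¹ ≠ 0 := by positivity
  exact mySmul_isUnit this ha

lemma sum_memP {N : ℕ} (x : Fin (N + 1) → A)
    (hx : ∀ j, 0 ≤ x j ∧ IsUnit (x j)) :
    0 ≤ ∑ j, x j ∧ IsUnit (∑ j, x j) := by
  have hnn : (0 : A) ≤ ∑ j, x j := Finset.sum_nonneg fun j _ => (hx j).1
  have hle : x 0 ≤ ∑ j, x j :=
    Finset.single_le_sum (fun j _ => (hx j).1) (Finset.mem_univ 0)
  exact ⟨hnn, CStarAlgebra.isUnit_of_le _ hle ((hx 0).2.isStrictlyPositive (hx 0).1)⟩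

lemma mean_memP {N : ℕ} (x : Fin (N + 1) → A)
    (hx : ∀ j, 0 ≤ x j ∧ IsUnit (x j)) :
    0 ≤ ((N + 1 : ℕ) : ℂ)⁻¹ • ∑ j, x j ∧ IsUnit (((N + 1 : ℕ) : ℂ)⁻¹ • ∑ j, x j) := by
  obtain ⟨h1, h2⟩ := sum_memP x hx
  exact ⟨csmul_nonneg _ h1, csmul_isUnit (Nat.succ_ne_zero N) h2⟩

end Aux

section MeasureAux

lemma pi_swap_le {A : Type*} [MeasurableSpace A] {n : ℕ}
    (σ : Fin (n + 1) → Measure A) (m' : Measure A)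
    (hσ : ∀ j, IsProbabilityMeasure (σ j)) (hm' : IsProbabilityMeasure m')
    (k : Fin (n + 1)) {T : Set (Fin (n + 1) → A)} (hT : MeasurableSet T)
    (hsec : ∀ y : Fin n → A,
      σ k {t | k.insertNth t y ∈ T} ≤ m' {t | k.insertNth t y ∈ T}) :
    Measure.pi σ T ≤ Measure.pi (Function.update σ k m') T := by
  classical
  haveI := hσ; haveI := hm'
  haveI hupd : ∀ j, IsProbabilityMeasure (Function.update σ k m' j) := fun j => by
    rcases eq_or_ne j k with rfl | h
    · rw [Function.update_self]; exact hm'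
    · rw [Function.update_of_ne h]; exact hσ j
  set e := MeasurableEquiv.piFinSuccAbove (fun _ : Fin (n + 1) => A) k with he
  have key : ∀ (τ : Fin (n + 1) → Measure A), (∀ j, IsProbabilityMeasure (τ j)) →
      Measure.pi τ T = ∫⁻ y, τ k {t | k.insertNth t y ∈ T}
        ∂(Measure.pi fun j => τ (k.succAbove j)) := by
    intro τ hτ
    haveI := hτ
    have h1 := measurePreserving_piFinSuccAbove τ k
    have hTS : MeasurableSet ((⇑e.symm) ⁻¹' T) := e.symm.measurable hT
    have h2 : Measure.pi τ T
        = ((τ k).prod (Measure.pi fun j => τ (k.succAbove j))) ((⇑e.symm) ⁻¹' T) := by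
      rw [← h1.map_eq, MeasurableEquiv.map_apply, Set.preimage_preimage]
      congr 1
      ext x
      simp only [he, MeasurableEquiv.symm_apply_apply, Set.mem_preimage]
    rw [h2, Measure.prod_apply_symm hTS]
    exact lintegral_congr fun y => rfl
  rw [key σ hσ, key _ hupd, Function.update_self]
  have hrest : (fun j => Function.update σ k m' (k.succAbove j)) = fun j => σ (k.succAbove j) := by
    funext j; rw [Function.update_of_ne (Fin.succAbove_ne k j)]
  rw [hrest]
  exact lintegral_mono fun y => hsec y

lemma pi_le_pi_of_sections {A : Type*} [MeasurableSpace A] {n : ℕ}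
    (μ ν : Fin (n + 1) → Measure A)
    (hμ : ∀ j, IsProbabilityMeasure (μ j)) (hν : ∀ j, IsProbabilityMeasure (ν j))
    {T : Set (Fin (n + 1) → A)} (hT : MeasurableSet T)
    (hsec : ∀ (k : Fin (n + 1)) (y : Fin n → A),
      μ k {t | k.insertNth t y ∈ T} ≤ ν k {t | k.insertNth t y ∈ T}) :
    Measure.pi μ T ≤ Measure.pi ν T := by
  classical
  have main : ∀ m : ℕ, m ≤ n + 1 → Measure.pi μ T ≤
      Measure.pi (fun j : Fin (n + 1) => if (j : ℕ) < m then ν j else μ j) T := by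
    intro m
    induction m with
    | zero => intro _; simp
    | succ m ih =>
      intro hm
      have hmlt : m < n + 1 := hm
      refine (ih (Nat.le_of_lt hmlt)).trans ?_
      set k : Fin (n + 1) := ⟨m, hmlt⟩ with hk
      have hupd : (fun j : Fin (n + 1) => if (j : ℕ) < m + 1 then ν j else μ j)
          = Function.update (fun j : Fin (n + 1) => if (j : ℕ) < m then ν j else μ j) k (ν k) := by
        funext j
        rcases eq_or_ne j k with rfl | hj
        · rw [Function.update_self, hk]
          simp [Nat.lt_succ_self]
        · rw [Function.update_of_ne hj]
          have hjm : (j : ℕ) ≠ m := fun h => hj (Fin.ext h)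
          by_cases h : (j : ℕ) < m
          · simp [h, Nat.lt_succ_of_lt h]
          · have h' : ¬(j : ℕ) < m + 1 := by omega
            simp [h, h']
      rw [hupd]
      refine pi_swap_le _ _ (fun j => ?_) (hν k) k hT (fun y => ?_)
      · split
        · exact hν j
        · exact hμ j
      · have hkk : (if (k : ℕ) < m then ν k else μ k) = μ k := by
          rw [hk]; simp
        simp only [hkk]
        exact hsec k y
  have h := main (n + 1) le_rfl
  have hall : (fun j : Fin (n + 1) => if (j : ℕ) < n + 1 then ν j else μ j) = ν := by
    funext j; simp [j.isLt]
  rwa [hall] at h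

end MeasureAux

section MainAux

variable {A : Type*} [CStarAlgebra A] [PartialOrder A] [StarOrderedRing A]
    [MeasurableSpace A] [BorelSpace A]

lemma Pset_measurable : MeasurableSet {a : A | 0 ≤ a ∧ IsUnit a} := by
  have h : {a : A | 0 ≤ a ∧ IsUnit a} = {a : A | 0 ≤ a} ∩ {a : A | IsUnit a} := rfl
  rw [h]
  exact myPosClosed.measurableSet.inter myUnitsOpen.measurableSet

lemma main_aux {n : ℕ} (μ ν : Fin (n + 1) → Measure A)
    (hprobμ : ∀ j, IsProbabilityMeasure (μ j)) (hprobν : ∀ j, IsProbabilityMeasure (ν j))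
    (hconcμ : ∀ j, μ j {a : A | 0 ≤ a ∧ IsUnit a} = 1)
    (hconcν : ∀ j, ν j {a : A | 0 ≤ a ∧ IsUnit a} = 1)
    (hle : ∀ j, StochasticOrderOnPosInv (μ j) (ν j))
    (f : (Fin (n + 1) → A) → A) (hf : Measurable f)
    (hfP : ∀ x : Fin (n + 1) → A, (∀ j, x j ∈ {a : A | 0 ≤ a ∧ IsUnit a}) →
      f x ∈ {a : A | 0 ≤ a ∧ IsUnit a})
    (hopen : ∀ (k : Fin (n + 1)) (y : Fin n → A),
      (∀ j, y j ∈ {a : A | 0 ≤ a ∧ IsUnit a}) →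
      ∀ V : Set A, IsOpen V → ∃ W : Set A, IsOpen W ∧
        ∀ t, t ∈ {a : A | 0 ≤ a ∧ IsUnit a} → (f (k.insertNth t y) ∈ V ↔ t ∈ W))
    (hmono : ∀ (k : Fin (n + 1)) (y : Fin n → A),
      (∀ j, y j ∈ {a : A | 0 ≤ a ∧ IsUnit a}) →
      ∀ t, t ∈ {a : A | 0 ≤ a ∧ IsUnit a} → ∀ t', t' ∈ {a : A | 0 ≤ a ∧ IsUnit a} → t ≤ t' →
        f (k.insertNth t y) ≤ f (k.insertNth t' y)) :
    StochasticOrderOnPosInv ((Measure.pi μ).map f) ((Measure.pi ν).map f) := by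
  intro U hUP hUopen hUup
  haveI := hprobμ; haveI := hprobν
  obtain ⟨V, hV, hUV⟩ := hUopen
  have hUmeas : MeasurableSet U := by
    rw [hUV]; exact hV.measurableSet.inter Pset_measurable
  rw [Measure.map_apply hf hUmeas, Measure.map_apply hf hUmeas]
  set Pn : Set (Fin (n + 1) → A) := Set.pi Set.univ (fun _ => {a : A | 0 ≤ a ∧ IsUnit a})
    with hPn
  have hPnmeas : MeasurableSet Pn := MeasurableSet.univ_pi (fun _ => Pset_measurable)
  have hT : MeasurableSet (f ⁻¹' U ∩ Pn) := (hf hUmeas).inter hPnmeas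
  have hreduce : ∀ (τ : Fin (n + 1) → Measure A), (∀ j, IsProbabilityMeasure (τ j)) →
      (∀ j, τ j {a : A | 0 ≤ a ∧ IsUnit a} = 1) →
      Measure.pi τ (f ⁻¹' U) = Measure.pi τ (f ⁻¹' U ∩ Pn) := by
    intro τ hτ hτc
    haveI := hτ
    have hPn1 : Measure.pi τ Pn = 1 := by
      rw [hPn, Measure.pi_pi]
      simp [hτc]
    have hnull : Measure.pi τ Pnᶜ = 0 := by
      rw [measure_compl hPnmeas (measure_ne_top _ _), hPn1, measure_univ, tsub_self]
    refine le_antisymm ?_ (measure_mono Set.inter_subset_left)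
    calc Measure.pi τ (f ⁻¹' U) ≤ Measure.pi τ ((f ⁻¹' U ∩ Pn) ∪ Pnᶜ) := by
          apply measure_mono
          intro x hx
          by_cases hxP : x ∈ Pn
          · exact Or.inl ⟨hx, hxP⟩
          · exact Or.inr hxP
      _ ≤ Measure.pi τ (f ⁻¹' U ∩ Pn) + Measure.pi τ Pnᶜ := measure_union_le _ _
      _ = Measure.pi τ (f ⁻¹' U ∩ Pn) := by rw [hnull, add_zero]
  rw [hreduce μ hprobμ hconcμ, hreduce ν hprobν hconcν]
  apply pi_le_pi_of_sections μ ν hprobμ hprobν hT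
  intro k y
  by_cases hy : ∀ j, y j ∈ {a : A | 0 ≤ a ∧ IsUnit a}
  · have hcoords : ∀ t, t ∈ {a : A | 0 ≤ a ∧ IsUnit a} →
        ∀ j, (k.insertNth t y : Fin (n + 1) → A) j ∈ {a : A | 0 ≤ a ∧ IsUnit a} := by
      intro t ht
      rw [Fin.forall_iff_succAbove k]
      constructor
      · rwa [Fin.insertNth_apply_same]
      · intro j; rw [Fin.insertNth_apply_succAbove]; exact hy j
    have hPn_iff : ∀ t : A, (k.insertNth t y ∈ Pn ↔ t ∈ {a : A | 0 ≤ a ∧ IsUnit a}) := by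
      intro t
      constructor
      · intro h
        have := h k (Set.mem_univ _)
        rwa [Fin.insertNth_apply_same] at this
      · intro ht j _
        exact hcoords t ht j
    have hsub : {t : A | k.insertNth t y ∈ f ⁻¹' U ∩ Pn} ⊆ {a : A | 0 ≤ a ∧ IsUnit a} := by
      intro t ht
      exact (hPn_iff t).mp ht.2
    refine hle k _ hsub ?_ ?_
    · obtain ⟨W, hW, hWiff⟩ := hopen k y hy V hV
      refine ⟨W, hW, ?_⟩
      ext t
      simp only [Set.mem_setOf_eq, Set.mem_inter_iff, Set.mem_preimage]
      constructor
      · intro ht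
        have htP : t ∈ {a : A | 0 ≤ a ∧ IsUnit a} := hsub ht
        have hfV : f (k.insertNth t y) ∈ V := by
          have := ht.1
          rw [hUV] at this
          exact this.1
        exact ⟨(hWiff t htP).mp hfV, htP⟩
      · rintro ⟨htW, htP⟩
        have hfV : f (k.insertNth t y) ∈ V := (hWiff t htP).mpr htW
        have hfPmem : f (k.insertNth t y) ∈ {a : A | 0 ≤ a ∧ IsUnit a} :=
          hfP _ (hcoords t htP)
        refine ⟨?_, (hPn_iff t).mpr htP⟩
        rw [hUV]
        exact ⟨hfV, hfPmem⟩
    · intro t ht s hs0 hsu hts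
      have htP : t ∈ {a : A | 0 ≤ a ∧ IsUnit a} := hsub ht
      have hsP : s ∈ {a : A | 0 ≤ a ∧ IsUnit a} := ⟨hs0, hsu⟩
      have h1 : f (k.insertNth t y) ≤ f (k.insertNth s y) := hmono k y hy t htP s hsP hts
      have h3 : f (k.insertNth s y) ∈ {a : A | 0 ≤ a ∧ IsUnit a} := hfP _ (hcoords s hsP)
      have h4 : f (k.insertNth s y) ∈ U := hUup _ ht.1 _ h3.1 h3.2 h1
      exact ⟨h4, (hPn_iff s).mpr hsP⟩
  · have hempty : {t : A | k.insertNth t y ∈ f ⁻¹' U ∩ Pn} = ∅ := by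
      ext t
      simp only [Set.mem_setOf_eq, Set.mem_empty_iff_false, iff_false]
      rintro ⟨-, hPn'⟩
      apply hy
      intro j
      have := hPn' (k.succAbove j) (Set.mem_univ _)
      rwa [Fin.insertNth_apply_succAbove] at this
    rw [hempty]
    simp

end MainAux

/-- Let `A` be a separable unital C*-algebra with its canonical order, and
`P = {a : A | 0 ≤ a ∧ IsUnit a}` its set of positive invertible elements (on which
`Ring.inverse` is the genuine inversion `a ↦ a⁻¹`). If `μ₁, …, μₙ` and `ν₁, …, νₙ` are tight
Borel probability measures on `P` with `μⱼ ≤ νⱼ` in the stochastic order for each `j`, then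
`𝒜(μ₁,…,μₙ) ≤ 𝒜(ν₁,…,νₙ)` and `ℋ(μ₁,…,μₙ) ≤ ℋ(ν₁,…,νₙ)` in the stochastic order,
where `𝒜` is the push-forward of the product measure under `(a₁,…,aₙ) ↦ (1/n)∑ aⱼ`
and `ℋ` the push-forward under `(a₁,…,aₙ) ↦ ((1/n)∑ aⱼ⁻¹)⁻¹`. -/
theorem arithmeticMean_harmonicMean_monotone {A : Type*} [CStarAlgebra A] [PartialOrder A]
    [StarOrderedRing A] [TopologicalSpace.SeparableSpace A] [MeasurableSpace A] [BorelSpace A]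
    (n : ℕ) (hn : 0 < n) (μ ν : Fin n → Measure A)
    (hprobμ : ∀ j, IsProbabilityMeasure (μ j)) (hprobν : ∀ j, IsProbabilityMeasure (ν j))
    (hconcμ : ∀ j, μ j {a : A | 0 ≤ a ∧ IsUnit a} = 1)
    (hconcν : ∀ j, ν j {a : A | 0 ≤ a ∧ IsUnit a} = 1)
    (htightμ : ∀ j, TightOnPosInv (μ j)) (htightν : ∀ j, TightOnPosInv (ν j))
    (hle : ∀ j, StochasticOrderOnPosInv (μ j) (ν j)) :
    StochasticOrderOnPosInv
        ((Measure.pi μ).map (fun a : Fin n → A => (n : ℂ)⁻¹ • ∑ j, a j))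
        ((Measure.pi ν).map (fun a : Fin n → A => (n : ℂ)⁻¹ • ∑ j, a j)) ∧
      StochasticOrderOnPosInv
        ((Measure.pi μ).map
          (fun a : Fin n → A => Ring.inverse ((n : ℂ)⁻¹ • ∑ j, Ring.inverse (a j))))
        ((Measure.pi ν).map
          (fun a : Fin n → A => Ring.inverse ((n : ℂ)⁻¹ • ∑ j, Ring.inverse (a j)))) := by
  obtain ⟨m, rfl⟩ : ∃ m, n = m + 1 := ⟨n - 1, (Nat.succ_pred_eq_of_pos hn).symm⟩
  set c : ℂ := ((m + 1 : ℕ) : ℂ)⁻¹ with hc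
  constructor
  · -- arithmetic mean
    have hg : ∀ (k : Fin (m + 1)) (y : Fin m → A) (t : A),
        ((m + 1 : ℕ) : ℂ)⁻¹ • ∑ j, (k.insertNth t y) j
          = ((m + 1 : ℕ) : ℂ)⁻¹ • (t + ∑ j, y j) := by
      intro k y t
      rw [Fin.sum_univ_succAbove (k.insertNth t y) k]
      simp [Fin.insertNth_apply_same, Fin.insertNth_apply_succAbove]
    apply main_aux μ ν hprobμ hprobν hconcμ hconcν hle
    · -- measurability
      have hsum : Measurable fun x : Fin (m + 1) → A => ∑ j, x j :=
        Finset.measurable_sum Finset.univ (fun j _ => measurable_pi_apply j)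
      exact (continuous_const_smul _).measurable.comp hsum
    · intro x hx
      exact mean_memP x hx
    · intro k y hy V hV
      refine ⟨(fun t : A => ((m + 1 : ℕ) : ℂ)⁻¹ • (t + ∑ j, y j)) ⁻¹' V, ?_, ?_⟩
      · exact hV.preimage ((continuous_id.add continuous_const).const_smul _)
      · intro t _
        rw [hg k y t]
        exact Iff.rfl
    · intro k y hy t htP t' htP' htt'
      rw [hg k y t, hg k y t']
      exact csmul_mono _ (add_le_add_left htt' _)
  · -- harmonic mean
    have hg : ∀ (k : Fin (m + 1)) (y : Fin m → A) (t : A),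
        Ring.inverse (((m + 1 : ℕ) : ℂ)⁻¹ • ∑ j, Ring.inverse ((k.insertNth t y) j))
          = Ring.inverse (((m + 1 : ℕ) : ℂ)⁻¹ •
              (Ring.inverse t + ∑ j, Ring.inverse (y j))) := by
      intro k y t
      rw [Fin.sum_univ_succAbove (fun j => Ring.inverse ((k.insertNth t y) j)) k]
      simp [Fin.insertNth_apply_same, Fin.insertNth_apply_succAbove]
    apply main_aux μ ν hprobμ hprobν hconcμ hconcν hle
    · -- measurability
      have hsum : Measurable fun x : Fin (m + 1) → A => ∑ j, Ring.inverse (x j) :=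
        Finset.measurable_sum Finset.univ
          (fun j _ => myInvMeasurable.comp (measurable_pi_apply j))
      exact myInvMeasurable.comp ((continuous_const_smul _).measurable.comp hsum)
    · intro x hx
      have hinv : ∀ j, 0 ≤ Ring.inverse (x j) ∧ IsUnit (Ring.inverse (x j)) :=
        fun j => myInv_mem (hx j).1 (hx j).2
      obtain ⟨h1, h2⟩ := mean_memP (fun j => Ring.inverse (x j)) hinv
      exact myInv_mem h1 h2
    · intro k y hy V hV
      set S : A := ∑ j, Ring.inverse (y j) with hS
      have hSnn : (0 : A) ≤ S :=
        Finset.sum_nonneg fun j _ => (myInv_mem (hy j).1 (hy j).2).1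
      set h : A → A := fun t => ((m + 1 : ℕ) : ℂ)⁻¹ • (Ring.inverse t + S) with hh
      have hhP : ∀ t, t ∈ {a : A | 0 ≤ a ∧ IsUnit a} →
          (0 ≤ h t ∧ IsUnit (h t)) := by
        intro t ht
        obtain ⟨hi0, hiu⟩ := myInv_mem ht.1 ht.2
        have hsum0 : 0 ≤ Ring.inverse t + S := add_nonneg hi0 hSnn
        have hsumu : IsUnit (Ring.inverse t + S) :=
          CStarAlgebra.isUnit_of_le _ (le_add_of_nonneg_right hSnn) (hiu.isStrictlyPositive hi0)
        exact ⟨csmul_nonneg _ hsum0, csmul_isUnit (Nat.succ_ne_zero m) hsumu⟩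
      have hhOn : ContinuousOn h {x : A | IsUnit x} :=
        (myInvContOn.add continuousOn_const).const_smul _
      set Ω : Set A := {x : A | IsUnit x} ∩ h ⁻¹' {x : A | IsUnit x} with hΩdef
      have hΩ : IsOpen Ω := hhOn.isOpen_inter_preimage myUnitsOpen myUnitsOpen
      set g : A → A := fun t => Ring.inverse (h t) with hgdef
      have hgOn : ContinuousOn g Ω := by
        apply myInvContOn.comp (hhOn.mono Set.inter_subset_left)
        intro t ht
        exact ht.2
      have hW : IsOpen (Ω ∩ g ⁻¹' V) := hgOn.isOpen_inter_preimage hΩ hV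
      refine ⟨Ω ∩ g ⁻¹' V, hW, ?_⟩
      intro t htP
      have htΩ : t ∈ Ω := ⟨htP.2, (hhP t htP).2⟩
      rw [hg k y t]
      constructor
      · intro hmem
        exact ⟨htΩ, hmem⟩
      · rintro ⟨-, hmem⟩
        exact hmem
    · intro k y hy t htP t' htP' htt'
      rw [hg k y t, hg k y t']
      set S : A := ∑ j, Ring.inverse (y j) with hS
      have hSnn : (0 : A) ≤ S :=
        Finset.sum_nonneg fun j _ => (myInv_mem (hy j).1 (hy j).2).1
      obtain ⟨hi0, hiu⟩ := myInv_mem htP.1 htP.2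
      obtain ⟨hi0', hiu'⟩ := myInv_mem htP'.1 htP'.2
      have hinvle : Ring.inverse t' ≤ Ring.inverse t :=
        myInv_antitone htP.1 htP.2 htP'.2 htt'
      have hsum0' : 0 ≤ Ring.inverse t' + S := add_nonneg hi0' hSnn
      have hsumu' : IsUnit (Ring.inverse t' + S) :=
        CStarAlgebra.isUnit_of_le _ (le_add_of_nonneg_right hSnn) (hiu'.isStrictlyPositive hi0')
      have hsum0 : 0 ≤ Ring.inverse t + S := add_nonneg hi0 hSnn
      have hsumu : IsUnit (Ring.inverse t + S) :=
        CStarAlgebra.isUnit_of_le _ (le_add_of_nonneg_right hSnn) (hiu.isStrictlyPositive hi0)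
      have hle2 : ((m + 1 : ℕ) : ℂ)⁻¹ • (Ring.inverse t' + S)
          ≤ ((m + 1 : ℕ) : ℂ)⁻¹ • (Ring.inverse t + S) :=
        csmul_mono _ (add_le_add_left hinvle _)
      exact myInv_antitone (csmul_nonneg _ hsum0') (csmul_isUnit (Nat.succ_ne_zero m) hsumu')
        (csmul_isUnit (Nat.succ_ne_zero m) hsumu) hle2
end
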